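/- arXiv:2004.00714 — 4 statements merged into one kernel-verified Lean document; each statement's English description precedes it below -/
import Mathlib

section
/- Let X and Y be independent centered Gaussian random vectors in ℝⁿ with covariance matrices C^X and C^Y respectively. Let f: ℝⁿ → ℝ be a C² function such that f and all its first and second partial derivatives are bounded in absolute value by e^{λ(1+|x|)} for some constant λ ≥ 0. Then E[f(Y)] − E[f(X)] = (1/2) ∫₀¹ E[ Tr( (C^Y − C^X) · ∇²f(√t X + √(1−t) Y) ) ] dt, where ∇²f denotes the Hessian matrix of f. -/
open MeasureTheory ProbabilityTheory Real Filter
open scoped ENNReal NNReal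
set_option maxHeartbeats 1000000

/-- The standard Gaussian measure on `ℝⁿ` (product of `n` standard Gaussians). -/
noncomputable def stdGaussianPi (n : ℕ) : Measure (Fin n → ℝ) :=
  Measure.pi fun _ => gaussianReal 0 1


instance stdGaussianPi_prob (n : ℕ) : IsProbabilityMeasure (stdGaussianPi n) := by
  unfold stdGaussianPi; infer_instance

namespace InterpAux

lemma ampgm (c x : ℝ) : c * |x| ≤ c ^ 2 + x ^ 2 / 4 := by
  nlinarith [sq_nonneg (c - |x| / 2), sq_abs x]

lemma one_add_abs_le (x : ℝ) : 1 + |x| ≤ 2 * Real.exp |x| := by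
  have h1 : (1:ℝ) ≤ Real.exp |x| := Real.one_le_exp (abs_nonneg x)
  have h2 : |x| ≤ Real.exp |x| := (Real.add_one_le_exp |x|).trans' (by linarith [abs_nonneg x])
  linarith

lemma pdf_eq (x : ℝ) :
    gaussianPDFReal 0 1 x = (Real.sqrt (2 * π))⁻¹ * Real.exp (-x ^ 2 / 2) := by
  simp [gaussianPDFReal]

lemma pdf_le (x : ℝ) : gaussianPDFReal 0 1 x ≤ Real.exp (-x ^ 2 / 2) := by
  rw [pdf_eq]
  have h1 : (1:ℝ) ≤ Real.sqrt (2 * π) := by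
    rw [show (1:ℝ) = Real.sqrt 1 by simp]
    exact Real.sqrt_le_sqrt (by nlinarith [Real.pi_gt_three])
  calc (Real.sqrt (2 * π))⁻¹ * Real.exp (-x ^ 2 / 2)
      ≤ 1 * Real.exp (-x ^ 2 / 2) := by
        apply mul_le_mul_of_nonneg_right _ (Real.exp_nonneg _)
        exact inv_le_one_of_one_le₀ h1
    _ = Real.exp (-x ^ 2 / 2) := one_mul _

lemma pdf_hasDerivAt (x : ℝ) :
    HasDerivAt (gaussianPDFReal 0 1) (-x * gaussianPDFReal 0 1 x) x := by
  have h : ∀ y : ℝ, gaussianPDFReal 0 1 y = (Real.sqrt (2 * π))⁻¹ * Real.exp (-y ^ 2 / 2) :=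
    pdf_eq
  rw [funext h]
  simp only []
  have h1 : HasDerivAt (fun y : ℝ => -y ^ 2 / 2) (-x) x := by
    have : HasDerivAt (fun y : ℝ => -y ^ 2 / 2) (-(↑(2:ℕ) * x ^ (2 - 1)) / 2) x :=
      ((hasDerivAt_pow 2 x).neg).div_const 2
    convert this using 1
    simp; ring
  have h2 := (h1.exp).const_mul (Real.sqrt (2 * π))⁻¹
  exact h2.congr_deriv (by ring)

/-- integral of a function against the standard Gaussian equals the weighted Lebesgue
integral. -/
lemma integral_gaussianReal (h : ℝ → ℝ) :
    ∫ x, h x ∂(gaussianReal 0 1) = ∫ x, h x * gaussianPDFReal 0 1 x := by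
  rw [gaussianReal_of_var_ne_zero 0 one_ne_zero]
  have : ∀ x, gaussianPDF 0 1 x = ((gaussianPDFReal 0 1 x).toNNReal : ℝ≥0∞) := fun x => rfl
  rw [funext this, integral_withDensity_eq_integral_smul
    (measurable_gaussianPDFReal 0 1).real_toNNReal]
  congr 1
  ext x
  rw [NNReal.smul_def, Real.coe_toNNReal _ (gaussianPDFReal_nonneg 0 1 x), smul_eq_mul,
    mul_comm]

lemma integrable_gaussianReal_iff (h : ℝ → ℝ) :
    Integrable h (gaussianReal 0 1) ↔
      Integrable (fun x => h x * gaussianPDFReal 0 1 x) volume := by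
  rw [gaussianReal_of_var_ne_zero 0 one_ne_zero]
  rw [integrable_withDensity_iff (measurable_gaussianPDF 0 1)
    (ae_of_all _ fun x => ENNReal.ofReal_lt_top)]
  constructor <;> intro hi <;> [skip; skip] <;>
  · apply hi.congr
    filter_upwards with x
    rw [gaussianPDF, ENNReal.toReal_ofReal (gaussianPDFReal_nonneg 0 1 x)]

lemma integrable_exp_mul_abs_pdf (c : ℝ) :
    Integrable (fun x => Real.exp (c * |x|) * gaussianPDFReal 0 1 x) volume := by
  have hmeas : AEStronglyMeasurable (fun x => Real.exp (c * |x|) * gaussianPDFReal 0 1 x)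
      volume := ((Real.continuous_exp.comp (continuous_const.mul continuous_abs))).aestronglyMeasurable.mul
      (stronglyMeasurable_gaussianPDFReal 0 1).aestronglyMeasurable
  refine Integrable.mono' ((integrable_exp_neg_mul_sq (show (0:ℝ) < 1/4 by norm_num)).const_mul
    (Real.exp (|c| ^ 2))) hmeas (ae_of_all _ fun x => ?_)
  have hb : Real.exp (c * |x|) * gaussianPDFReal 0 1 x ≤
      Real.exp (|c| ^ 2) * Real.exp (-(1/4) * x ^ 2) := by
    calc Real.exp (c * |x|) * gaussianPDFReal 0 1 x
        ≤ Real.exp (|c| * |x|) * Real.exp (-x ^ 2 / 2) := by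
          apply mul_le_mul _ (pdf_le x) (gaussianPDFReal_nonneg 0 1 x) (Real.exp_nonneg _)
          exact Real.exp_le_exp.2 (mul_le_mul_of_nonneg_right (le_abs_self c) (abs_nonneg x))
      _ = Real.exp (|c| * |x| + -x ^ 2 / 2) := (Real.exp_add _ _).symm
      _ ≤ Real.exp (|c| ^ 2 + -(1/4) * x ^ 2) := by
          apply Real.exp_le_exp.2
          have := ampgm |c| x
          nlinarith
      _ = Real.exp (|c| ^ 2) * Real.exp (-(1/4) * x ^ 2) := Real.exp_add _ _
  rw [Real.norm_eq_abs, abs_of_nonneg (mul_nonneg (Real.exp_nonneg _)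
    (gaussianPDFReal_nonneg 0 1 x))]
  exact hb

lemma integrable_exp_mul_abs (c : ℝ) :
    Integrable (fun x => Real.exp (c * |x|)) (gaussianReal 0 1) := by
  rw [integrable_gaussianReal_iff]
  exact integrable_exp_mul_abs_pdf c


lemma pdf_continuous : Continuous (gaussianPDFReal 0 1) := by
  rw [funext pdf_eq]
  exact continuous_const.mul (Real.continuous_exp.comp ((continuous_pow 2).neg.div_const 2))

lemma norm_bound_aux {c D : ℝ} (hc : 0 ≤ c) (hD : 0 ≤ D) {a x : ℝ}
    (ha : |a| ≤ D * (1 + |x|) * Real.exp (c * |x|)) :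
    ‖a * gaussianPDFReal 0 1 x‖ ≤ 2 * D * Real.exp ((c + 1) ^ 2) * Real.exp (-(1/4) * x ^ 2) := by
  rw [Real.norm_eq_abs, abs_mul, abs_of_nonneg (gaussianPDFReal_nonneg 0 1 x)]
  have h1 : |a| * gaussianPDFReal 0 1 x ≤ (D * (1 + |x|) * Real.exp (c * |x|)) *
      Real.exp (-x ^ 2 / 2) :=
    mul_le_mul ha (pdf_le x) (gaussianPDFReal_nonneg 0 1 x) (by positivity)
  refine h1.trans ?_
  have h2 : 1 + |x| ≤ 2 * Real.exp |x| := one_add_abs_le x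
  have key : Real.exp (|x| + c * |x| + -x ^ 2 / 2) ≤ Real.exp ((c+1)^2 + -(1/4) * x^2) := by
    apply Real.exp_le_exp.2
    nlinarith [ampgm (c+1) x]
  calc D * (1 + |x|) * Real.exp (c * |x|) * Real.exp (-x ^ 2 / 2)
      ≤ D * (2 * Real.exp |x|) * Real.exp (c * |x|) * Real.exp (-x ^ 2 / 2) :=
        mul_le_mul_of_nonneg_right (mul_le_mul_of_nonneg_right
          (mul_le_mul_of_nonneg_left h2 hD) (Real.exp_nonneg _)) (Real.exp_nonneg _)
    _ = 2 * D * Real.exp (|x| + c * |x| + -x ^ 2 / 2) := by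
        rw [Real.exp_add, Real.exp_add]; ring
    _ ≤ 2 * D * Real.exp ((c+1)^2 + -(1/4) * x^2) :=
        mul_le_mul_of_nonneg_left key (by linarith)
    _ = 2 * D * Real.exp ((c + 1) ^ 2) * Real.exp (-(1/4) * x ^ 2) := by
        rw [Real.exp_add]; ring

/-- One-dimensional Gaussian integration by parts. -/
lemma ibp_1d (g : ℝ → ℝ) (hg : ContDiff ℝ 1 g) (c D : ℝ) (hc : 0 ≤ c) (hD : 0 ≤ D)
    (h0 : ∀ x, |g x| ≤ D * Real.exp (c * |x|))
    (h1 : ∀ x, |deriv g x| ≤ D * Real.exp (c * |x|)) :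
    ∫ x, x * g x ∂(gaussianReal 0 1) = ∫ x, deriv g x ∂(gaussianReal 0 1) := by
  set φ : ℝ → ℝ := gaussianPDFReal 0 1 with hφdef
  set Ψ : ℝ → ℝ := fun x => g x * φ x with hΨdef
  set Ψ' : ℝ → ℝ := fun x => (deriv g x - x * g x) * φ x with hΨ'def
  have hgd : Differentiable ℝ g := hg.differentiable one_ne_zero
  have hΨd : ∀ x, HasDerivAt Ψ (Ψ' x) x := by
    intro x
    have := ((hgd x).hasDerivAt).mul (pdf_hasDerivAt x)
    exact this.congr_deriv (by simp only [hΨ'def, hφdef]; ring)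
  have hK : ∀ x, ‖Ψ' x‖ ≤ 2 * (2*D) * Real.exp ((c + 1) ^ 2) * Real.exp (-(1/4) * x ^ 2) := by
    intro x
    apply norm_bound_aux hc (by linarith)
    have : |deriv g x - x * g x| ≤ |deriv g x| + |x| * |g x| := by
      refine (abs_sub _ _).trans ?_
      rw [abs_mul]
    calc |deriv g x - x * g x| ≤ |deriv g x| + |x| * |g x| := this
      _ ≤ D * Real.exp (c * |x|) + |x| * (D * Real.exp (c * |x|)) := by
          refine add_le_add (h1 x) (mul_le_mul_of_nonneg_left (h0 x) (abs_nonneg x))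
      _ = D * (1 + |x|) * Real.exp (c * |x|) := by ring
      _ ≤ 2 * D * (1 + |x|) * Real.exp (c * |x|) := by
          nlinarith [mul_nonneg (mul_nonneg hD (abs_nonneg x)) (Real.exp_nonneg (c*|x|)), mul_nonneg hD (Real.exp_nonneg (c*|x|))]
  have hΨ'meas : AEStronglyMeasurable Ψ' volume := by
    apply Continuous.aestronglyMeasurable
    exact ((hg.continuous_deriv le_rfl).sub (continuous_id.mul hg.continuous)).mul
      ((pdf_continuous))
  have hdom : Integrable (fun x => 2 * (2*D) * Real.exp ((c + 1) ^ 2) *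
      Real.exp (-(1/4) * x ^ 2)) volume :=
    ((integrable_exp_neg_mul_sq (show (0:ℝ) < 1/4 by norm_num)).const_mul _)
  have hΨ'int : Integrable Ψ' volume :=
    Integrable.mono' hdom hΨ'meas (ae_of_all _ hK)
  -- limits at ±∞
  have hbound : ∀ x, ‖Ψ x‖ ≤ 2 * (2*D) * Real.exp ((c + 1) ^ 2) * Real.exp (-(1/4) * x ^ 2) := by
    intro x
    apply norm_bound_aux hc (by linarith)
    calc |g x| ≤ D * Real.exp (c * |x|) := h0 x
      _ ≤ 2 * D * (1 + |x|) * Real.exp (c * |x|) := by nlinarith [mul_nonneg (mul_nonneg hD (abs_nonneg x)) (Real.exp_nonneg (c*|x|)), mul_nonneg hD (Real.exp_nonneg (c*|x|))]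
  have htend : Tendsto (fun x : ℝ => 2 * (2*D) * Real.exp ((c + 1) ^ 2) *
      Real.exp (-(1/4) * x ^ 2)) (Filter.atTop ⊔ Filter.atBot) (nhds 0) := by
    have h1 : Tendsto (fun x : ℝ => x ^ 2) (Filter.atTop ⊔ Filter.atBot) atTop := by
      rw [Filter.tendsto_sup]
      constructor
      · exact tendsto_pow_atTop (two_ne_zero)
      · have := (tendsto_pow_atTop (α := ℝ) (n := 2) (two_ne_zero)).comp
          tendsto_abs_atBot_atTop
        refine this.congr fun x => ?_
        simp [Function.comp, sq_abs]
    have hx2 : Tendsto (fun x : ℝ => -(1/4) * x ^ 2) (Filter.atTop ⊔ Filter.atBot) atBot := by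
      have h3 := tendsto_neg_atTop_atBot.comp (h1.atTop_div_const (show (0:ℝ) < 4 by norm_num))
      refine h3.congr fun x => ?_
      simp [Function.comp]; ring
    have h4 : Tendsto (fun x : ℝ => Real.exp (-(1/4) * x ^ 2)) (Filter.atTop ⊔ Filter.atBot)
        (nhds 0) := Real.tendsto_exp_atBot.comp hx2
    have := h4.const_mul (2 * (2*D) * Real.exp ((c + 1) ^ 2))
    simpa using this
  have htop : Tendsto Ψ atTop (nhds 0) :=
    squeeze_zero_norm hbound (htend.mono_left le_sup_left)
  have hbot : Tendsto Ψ atBot (nhds 0) :=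
    squeeze_zero_norm hbound (htend.mono_left le_sup_right)
  have hIoi : ∫ x in Set.Ioi (0:ℝ), Ψ' x = 0 - Ψ 0 :=
    integral_Ioi_of_hasDerivAt_of_tendsto' (fun x _ => hΨd x) hΨ'int.integrableOn htop
  have hIic : ∫ x in Set.Iic (0:ℝ), Ψ' x = Ψ 0 - 0 :=
    integral_Iic_of_hasDerivAt_of_tendsto' (fun x _ => hΨd x) hΨ'int.integrableOn hbot
  have htotal : ∫ x, Ψ' x = 0 := by
    rw [← setIntegral_univ, ← Set.Iic_union_Ioi (a := (0:ℝ)),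
      setIntegral_union (Set.Iic_disjoint_Ioi le_rfl) measurableSet_Ioi
        hΨ'int.integrableOn hΨ'int.integrableOn, hIoi, hIic]
    ring
  -- two integrable pieces
  have hint1 : Integrable (fun x => deriv g x * φ x) volume := by
    apply Integrable.mono' hdom
    · exact Continuous.aestronglyMeasurable ((hg.continuous_deriv le_rfl).mul
        (pdf_continuous))
    · refine ae_of_all _ fun x => norm_bound_aux hc (by linarith) ?_
      calc |deriv g x| ≤ D * Real.exp (c * |x|) := h1 x
        _ ≤ 2 * D * (1 + |x|) * Real.exp (c * |x|) := by nlinarith [mul_nonneg (mul_nonneg hD (abs_nonneg x)) (Real.exp_nonneg (c*|x|)), mul_nonneg hD (Real.exp_nonneg (c*|x|))]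
  have hint2 : Integrable (fun x => x * g x * φ x) volume := by
    apply Integrable.mono' hdom
    · exact Continuous.aestronglyMeasurable ((continuous_id.mul hg.continuous).mul
        (pdf_continuous))
    · refine ae_of_all _ fun x => norm_bound_aux hc (by linarith) ?_
      calc |x * g x| = |x| * |g x| := abs_mul _ _
        _ ≤ |x| * (D * Real.exp (c * |x|)) := mul_le_mul_of_nonneg_left (h0 x) (abs_nonneg x)
        _ ≤ 2 * D * (1 + |x|) * Real.exp (c * |x|) := by nlinarith [mul_nonneg (mul_nonneg hD (abs_nonneg x)) (Real.exp_nonneg (c*|x|)), mul_nonneg hD (Real.exp_nonneg (c*|x|))]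
  have hsub : ∫ x, Ψ' x = (∫ x, deriv g x * φ x) - ∫ x, x * g x * φ x := by
    rw [← integral_sub hint1 hint2]
    congr 1
    ext x
    simp only [hΨ'def]
    ring
  rw [integral_gaussianReal, integral_gaussianReal]
  simp only [hφdef] at hsub
  have h5 := hsub.symm.trans htotal
  linarith [h5]


lemma integrable_exp_sum_abs (n : ℕ) (c : ℝ) :
    Integrable (fun u : Fin n → ℝ => Real.exp (c * ∑ j, |u j|)) (stdGaussianPi n) := by
  induction n with
  | zero =>
      simp only [Finset.univ_eq_empty, Finset.sum_empty, mul_zero, Real.exp_zero]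
      exact integrable_const 1
  | succ m ih =>
      have hmp := (measurePreserving_piFinSuccAbove (fun _ : Fin (m+1) => gaussianReal 0 1) 0).symm
      rw [stdGaussianPi, ← hmp.integrable_comp_emb (MeasurableEquiv.measurableEmbedding _)]
      have hbase : Integrable (fun p : ℝ × (Fin m → ℝ) =>
          Real.exp (c * |p.1|) * Real.exp (c * ∑ j, |p.2 j|))
          ((gaussianReal 0 1).prod (stdGaussianPi m)) :=
        Integrable.mul_prod (integrable_exp_mul_abs c) ih
      apply hbase.congr
      filter_upwards with p
      simp only [MeasurableEquiv.piFinSuccAbove_symm_apply, Function.comp_apply,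
        Fin.insertNthEquiv, Equiv.coe_fn_mk, Fin.insertNth_zero]
      rw [Fin.sum_univ_succ]
      simp only [Fin.cons_zero, Fin.cons_succ, cast_eq]
      rw [mul_add, Real.exp_add]

/-- Gaussian integration by parts on `ℝⁿ` for the `k`-th coordinate. -/
lemma ibp_pi {n : ℕ} (h : (Fin n → ℝ) → ℝ) (hh : ContDiff ℝ 1 h) (k : Fin n)
    (c D : ℝ) (hc : 0 ≤ c) (hD : 0 ≤ D)
    (hb : ∀ u, |h u| ≤ D * Real.exp (c * ∑ j, |u j|))
    (hb' : ∀ u, |fderiv ℝ h u (Pi.single k 1)| ≤ D * Real.exp (c * ∑ j, |u j|)) :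
    ∫ u, u k * h u ∂(stdGaussianPi n)
      = ∫ u, fderiv ℝ h u (Pi.single k 1) ∂(stdGaussianPi n) := by
  cases n with
  | zero => exact k.elim0
  | succ m =>
  set e := MeasurableEquiv.piFinSuccAbove (fun _ : Fin (m+1) => ℝ) k with he
  have hmp : MeasurePreserving e (stdGaussianPi (m+1))
      ((gaussianReal 0 1).prod (stdGaussianPi m)) :=
    measurePreserving_piFinSuccAbove (fun _ : Fin (m+1) => gaussianReal 0 1) k
  set ins : ℝ → (Fin m → ℝ) → (Fin (m+1) → ℝ) := fun x r => k.insertNth x r with hinsdef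
  have hesymm : ∀ p : ℝ × (Fin m → ℝ), e.symm p = ins p.1 p.2 := by
    intro p
    simp [he, hinsdef, MeasurableEquiv.piFinSuccAbove_symm_apply, Fin.insertNthEquiv]
  -- affine structure of insertNth
  have hins : ∀ (x : ℝ) (r : Fin m → ℝ),
      ins x r = (fun y : ℝ => ins 0 r + y • (Pi.single k (1:ℝ) : Fin (m+1) → ℝ)) x := by
    intro x r
    ext j
    refine Fin.succAboveCases k ?_ ?_ j
    · simp [hinsdef]
    · intro j'
      simp [hinsdef, Fin.insertNth_apply_succAbove,
        Pi.single_eq_of_ne (Fin.succAbove_ne k j')]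
  have hcont_ins : Continuous (fun p : ℝ × (Fin m → ℝ) => ins p.1 p.2) := by
    apply continuous_pi
    intro j
    refine Fin.succAboveCases k ?_ ?_ j
    · simpa [hinsdef] using (continuous_fst : Continuous (fun p : ℝ × (Fin m → ℝ) => p.1))
    · intro j'
      simpa [hinsdef, Fin.insertNth_apply_succAbove, Function.comp_def] using
        ((continuous_apply j').comp (continuous_snd : Continuous (fun p : ℝ × (Fin m → ℝ) => p.2)))
  have hsum : ∀ (x : ℝ) (r : Fin m → ℝ),
      ∑ j, |ins x r j| = |x| + ∑ j, |r j| := by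
    intro x r
    rw [Fin.sum_univ_succAbove _ k]
    simp [hinsdef, Fin.insertNth_apply_succAbove]
  -- derivative of the slice
  have hgd : ∀ (r : Fin m → ℝ) (x : ℝ), HasDerivAt (fun y => h (ins y r))
      (fderiv ℝ h (ins x r) (Pi.single k 1)) x := by
    intro r x
    have haff : HasDerivAt (fun y : ℝ => ins y r) (Pi.single k 1) x := by
      have h2 : HasDerivAt (fun y : ℝ => ins 0 r + y • (Pi.single k (1:ℝ) : Fin (m+1) → ℝ))
          (Pi.single k 1) x := by
        simpa using (((hasDerivAt_id x).smul_const (Pi.single k (1:ℝ)))).const_add (ins 0 r)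
      exact h2.congr_of_eventuallyEq (Filter.Eventually.of_forall fun y => hins y r)
    exact (((hh.differentiable one_ne_zero) _).hasFDerivAt).comp_hasDerivAt x haff
  have hslice_cd : ∀ r : Fin m → ℝ, ContDiff ℝ 1 (fun y => h (ins y r)) := by
    intro r
    apply hh.comp
    have hfun : (fun y : ℝ => ins y r)
        = fun y => ins 0 r + y • (Pi.single k (1:ℝ) : Fin (m+1) → ℝ) :=
      funext fun y => hins y r
    rw [hfun]
    exact contDiff_const.add (contDiff_id.smul contDiff_const)
  -- slice bounds
  have hDr : ∀ r : Fin m → ℝ, (0:ℝ) ≤ D * Real.exp (c * ∑ j, |r j|) := fun r => by positivity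
  have hb1 : ∀ (r : Fin m → ℝ) (x : ℝ), |h (ins x r)| ≤
      (D * Real.exp (c * ∑ j, |r j|)) * Real.exp (c * |x|) := by
    intro r x
    calc |h (ins x r)| ≤ D * Real.exp (c * ∑ j, |ins x r j|) := hb _
      _ = (D * Real.exp (c * ∑ j, |r j|)) * Real.exp (c * |x|) := by
          rw [hsum, mul_add, Real.exp_add]; ring
  have hb2 : ∀ (r : Fin m → ℝ) (x : ℝ), |deriv (fun y => h (ins y r)) x| ≤
      (D * Real.exp (c * ∑ j, |r j|)) * Real.exp (c * |x|) := by
    intro r x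
    rw [(hgd r x).deriv]
    calc |fderiv ℝ h (ins x r) (Pi.single k 1)|
        ≤ D * Real.exp (c * ∑ j, |ins x r j|) := hb' _
      _ = (D * Real.exp (c * ∑ j, |r j|)) * Real.exp (c * |x|) := by
          rw [hsum, mul_add, Real.exp_add]; ring
  -- 1d IBP on slices
  have hibp : ∀ r : Fin m → ℝ,
      ∫ x, x * h (ins x r) ∂(gaussianReal 0 1)
        = ∫ x, fderiv ℝ h (ins x r) (Pi.single k 1) ∂(gaussianReal 0 1) := by
    intro r
    have h3 := ibp_1d (fun y => h (ins y r)) (hslice_cd r) c _ hc (hDr r) (hb1 r) (hb2 r)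
    rw [h3]
    exact integral_congr_ae (Filter.Eventually.of_forall fun x => (hgd r x).deriv)
  -- integrability on the product space
  have hprod := (gaussianReal 0 1).prod (stdGaussianPi m)
  have hmeas1 : AEStronglyMeasurable (fun p : ℝ × (Fin m → ℝ) => p.1 * h (ins p.1 p.2))
      ((gaussianReal 0 1).prod (stdGaussianPi m)) :=
    (continuous_fst.mul ((hh.continuous).comp hcont_ins)).aestronglyMeasurable
  have habs : ∀ x : ℝ, |x| * Real.exp (c * |x|) ≤ Real.exp ((c+1) * |x|) := by
    intro x
    have h4 : |x| ≤ Real.exp |x| :=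
      (le_add_of_nonneg_left zero_le_one).trans ((add_comm (1:ℝ) |x|) ▸ Real.add_one_le_exp |x|)
    calc |x| * Real.exp (c * |x|) ≤ Real.exp |x| * Real.exp (c * |x|) :=
          mul_le_mul_of_nonneg_right h4 (Real.exp_nonneg _)
      _ = Real.exp ((c+1) * |x|) := by rw [← Real.exp_add]; ring_nf
  have hint1 : Integrable (fun p : ℝ × (Fin m → ℝ) => p.1 * h (ins p.1 p.2))
      ((gaussianReal 0 1).prod (stdGaussianPi m)) := by
    refine Integrable.mono' (((integrable_exp_mul_abs (c+1)).mul_prod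
      (integrable_exp_sum_abs m c)).const_mul D) hmeas1 (ae_of_all _ fun p => ?_)
    rw [Real.norm_eq_abs, abs_mul]
    calc |p.1| * |h (ins p.1 p.2)|
        ≤ |p.1| * ((D * Real.exp (c * ∑ j, |p.2 j|)) * Real.exp (c * |p.1|)) :=
          mul_le_mul_of_nonneg_left (hb1 p.2 p.1) (abs_nonneg _)
      _ = D * ((|p.1| * Real.exp (c * |p.1|)) * Real.exp (c * ∑ j, |p.2 j|)) := by ring
      _ ≤ D * (Real.exp ((c+1) * |p.1|) * Real.exp (c * ∑ j, |p.2 j|)) := by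
          apply mul_le_mul_of_nonneg_left _ hD
          exact mul_le_mul_of_nonneg_right (habs p.1) (Real.exp_nonneg _)
  have hmeas2 : AEStronglyMeasurable
      (fun p : ℝ × (Fin m → ℝ) => fderiv ℝ h (ins p.1 p.2) (Pi.single k 1))
      ((gaussianReal 0 1).prod (stdGaussianPi m)) := by
    apply Continuous.aestronglyMeasurable
    exact ((ContinuousLinearMap.apply ℝ ℝ (Pi.single k (1:ℝ))).continuous).comp
      ((hh.continuous_fderiv one_ne_zero).comp hcont_ins)
  have hint2 : Integrable (fun p : ℝ × (Fin m → ℝ) => fderiv ℝ h (ins p.1 p.2) (Pi.single k 1))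
      ((gaussianReal 0 1).prod (stdGaussianPi m)) := by
    refine Integrable.mono' (((integrable_exp_mul_abs c).mul_prod
      (integrable_exp_sum_abs m c)).const_mul D) hmeas2 (ae_of_all _ fun p => ?_)
    rw [Real.norm_eq_abs]
    calc |fderiv ℝ h (ins p.1 p.2) (Pi.single k 1)|
        ≤ D * Real.exp (c * ∑ j, |ins p.1 p.2 j|) := hb' _
      _ = D * (Real.exp (c * |p.1|) * Real.exp (c * ∑ j, |p.2 j|)) := by
          rw [hsum, mul_add, Real.exp_add]
  -- the chain of equalities
  have hstep1 : ∫ u, u k * h u ∂(stdGaussianPi (m+1))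
      = ∫ p, p.1 * h (ins p.1 p.2) ∂((gaussianReal 0 1).prod (stdGaussianPi m)) := by
    rw [← hmp.integral_comp e.measurableEmbedding (fun p => p.1 * h (ins p.1 p.2))]
    refine integral_congr_ae (Filter.Eventually.of_forall fun u => ?_)
    have h5 : ins (e u).1 (e u).2 = u := by
      rw [← hesymm]
      exact e.symm_apply_apply u
    show u k * h u = (e u).1 * h (ins (e u).1 (e u).2)
    rw [h5]
    rfl
  have hstep5 : ∫ u, fderiv ℝ h u (Pi.single k 1) ∂(stdGaussianPi (m+1))
      = ∫ p, fderiv ℝ h (ins p.1 p.2) (Pi.single k 1)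
          ∂((gaussianReal 0 1).prod (stdGaussianPi m)) := by
    rw [← hmp.integral_comp e.measurableEmbedding
      (fun p => fderiv ℝ h (ins p.1 p.2) (Pi.single k 1))]
    refine integral_congr_ae (Filter.Eventually.of_forall fun u => ?_)
    have h5 : ins (e u).1 (e u).2 = u := by
      rw [← hesymm]
      exact e.symm_apply_apply u
    show fderiv ℝ h u (Pi.single k 1) = fderiv ℝ h (ins (e u).1 (e u).2) (Pi.single k 1)
    rw [h5]
  rw [hstep1, hstep5, integral_prod_symm _ hint1, integral_prod_symm _ hint2]
  exact integral_congr_ae (Filter.Eventually.of_forall fun r => hibp r)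


lemma sqrt_sum_sq_le {n : ℕ} (x : Fin n → ℝ) :
    Real.sqrt (∑ m, (x m) ^ 2) ≤ ∑ m, |x m| := by
  have h1 : ∑ m, (x m) ^ 2 ≤ (∑ m, |x m|) ^ 2 := by
    calc ∑ m, (x m) ^ 2 = ∑ m, |x m| ^ 2 := by simp [sq_abs]
      _ ≤ (∑ m, |x m|) ^ 2 := Finset.sum_sq_le_sq_sum_of_nonneg (fun i _ => abs_nonneg _)
  calc Real.sqrt (∑ m, (x m) ^ 2) ≤ Real.sqrt ((∑ m, |x m|) ^ 2) := Real.sqrt_le_sqrt h1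
    _ = ∑ m, |x m| := Real.sqrt_sq (by positivity)

lemma abs_mulVec_le {n : ℕ} (A : Matrix (Fin n) (Fin n) ℝ) (u : Fin n → ℝ) (i : Fin n) :
    |A.mulVec u i| ≤ (∑ i', ∑ j', |A i' j'|) * ∑ j, |u j| := by
  have h0 : A.mulVec u i = ∑ j, A i j * u j := by
    simp [Matrix.mulVec, dotProduct]
  rw [h0]
  calc |∑ j, A i j * u j| ≤ ∑ j, |A i j * u j| := Finset.abs_sum_le_sum_abs _ _
    _ = ∑ j, |A i j| * |u j| := by simp [abs_mul]
    _ ≤ ∑ j, (∑ i', ∑ j', |A i' j'|) * |u j| := by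
        refine Finset.sum_le_sum fun j _ => mul_le_mul_of_nonneg_right ?_ (abs_nonneg _)
        calc |A i j| ≤ ∑ j', |A i j'| :=
              Finset.single_le_sum (f := fun j' => |A i j'|)
                (fun j' _ => abs_nonneg _) (Finset.mem_univ j)
          _ ≤ ∑ i', ∑ j', |A i' j'| :=
              Finset.single_le_sum (f := fun i' => ∑ j', |A i' j'|)
                (fun i' _ => Finset.sum_nonneg fun j' _ => abs_nonneg _) (Finset.mem_univ i)
    _ = (∑ i', ∑ j', |A i' j'|) * ∑ j, |u j| := by rw [← Finset.mul_sum]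

lemma mulVec_continuous {n : ℕ} (A : Matrix (Fin n) (Fin n) ℝ) :
    Continuous fun u : Fin n → ℝ => A.mulVec u := by
  apply continuous_pi
  intro i
  have h0 : (fun u : Fin n → ℝ => A.mulVec u i) = fun u => ∑ j, A i j * u j := by
    ext u; simp [Matrix.mulVec, dotProduct]
  rw [h0]
  exact continuous_finset_sum _ fun j _ => continuous_const.mul (continuous_apply j)

lemma clm_apply_eq_sum {n : ℕ} (L : (Fin n → ℝ) →L[ℝ] ℝ) (w : Fin n → ℝ) :
    L w = ∑ i, w i * L (Pi.single i 1) := by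
  have h0 : w = ∑ i, w i • (Pi.single i (1:ℝ) : Fin n → ℝ) := by
    ext j
    rw [Finset.sum_apply]
    simp [Pi.single_apply]
  conv_lhs => rw [h0]
  rw [map_sum]
  exact Finset.sum_congr rfl fun i _ => by rw [L.map_smul, smul_eq_mul]

lemma abs_clm_apply_le {n : ℕ} (L : (Fin n → ℝ) →L[ℝ] ℝ) (w : Fin n → ℝ) (C : ℝ)
    (hC : ∀ i, |L (Pi.single i 1)| ≤ C) (hC0 : 0 ≤ C) :
    |L w| ≤ (∑ i, |w i|) * C := by
  rw [clm_apply_eq_sum L w]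
  calc |∑ i, w i * L (Pi.single i 1)| ≤ ∑ i, |w i * L (Pi.single i 1)| :=
        Finset.abs_sum_le_sum_abs _ _
    _ = ∑ i, |w i| * |L (Pi.single i 1)| := by simp [abs_mul]
    _ ≤ ∑ i, |w i| * C :=
        Finset.sum_le_sum fun i _ => mul_le_mul_of_nonneg_left (hC i) (abs_nonneg _)
    _ = (∑ i, |w i|) * C := by rw [Finset.sum_mul]

/-- chain rule for precomposition with an affine map built from a matrix. -/
lemma fderiv_comp_affine {n : ℕ} (g : (Fin n → ℝ) → ℝ) (hg : ContDiff ℝ 1 g)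
    (M : Matrix (Fin n) (Fin n) ℝ) (s : ℝ) (w : Fin n → ℝ) (u : Fin n → ℝ) (k : Fin n) :
    fderiv ℝ (fun y => g (fun m => s * M.mulVec y m + w m)) u (Pi.single k 1)
      = s * ∑ l, M l k *
          fderiv ℝ g (fun m => s * M.mulVec u m + w m) (Pi.single l 1) := by
  set T : (Fin n → ℝ) →L[ℝ] (Fin n → ℝ) :=
    (s • (Matrix.mulVecLin M)).toContinuousLinearMap with hT
  have hTval : ∀ y, T y = fun m => s * M.mulVec y m := by
    intro y; ext m
    simp [hT, Matrix.mulVecLin]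
  have haff : HasFDerivAt (fun y : Fin n → ℝ => (fun m => s * M.mulVec y m + w m)) T u := by
    have h1 : HasFDerivAt (fun y : Fin n → ℝ => T y + w) T u := (T.hasFDerivAt).add_const w
    refine h1.congr_of_eventuallyEq (Filter.Eventually.of_forall fun y => ?_)
    ext m
    simp only [Pi.add_apply, hTval]
  have hcomp : HasFDerivAt (fun y => g (fun m => s * M.mulVec y m + w m))
      (((fderiv ℝ g (fun m => s * M.mulVec u m + w m))).comp T) u := by
    have hg' := ((hg.differentiable one_ne_zero) (fun m => s * M.mulVec u m + w m)).hasFDerivAt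
    exact hg'.comp u haff
  rw [hcomp.fderiv]
  have hTk : T (Pi.single k 1) = fun l => s * M l k := by
    rw [hTval]
    ext l
    congr 1
    simp [Matrix.mulVec, dotProduct, Pi.single_apply]
  simp only [ContinuousLinearMap.coe_comp', Function.comp_apply, hTk]
  rw [clm_apply_eq_sum]
  rw [Finset.mul_sum]
  exact Finset.sum_congr rfl fun l _ => by ring

/-- variant of `fderiv_comp_affine` with the constant part first. -/
lemma fderiv_comp_affine' {n : ℕ} (g : (Fin n → ℝ) → ℝ) (hg : ContDiff ℝ 1 g)
    (M : Matrix (Fin n) (Fin n) ℝ) (s : ℝ) (w : Fin n → ℝ) (u : Fin n → ℝ) (k : Fin n) :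
    fderiv ℝ (fun y => g (fun m => w m + s * M.mulVec y m)) u (Pi.single k 1)
      = s * ∑ l, M l k *
          fderiv ℝ g (fun m => w m + s * M.mulVec u m) (Pi.single l 1) := by
  set T : (Fin n → ℝ) →L[ℝ] (Fin n → ℝ) :=
    (s • (Matrix.mulVecLin M)).toContinuousLinearMap with hT
  have hTval : ∀ y, T y = fun m => s * M.mulVec y m := by
    intro y; ext m
    simp [hT, Matrix.mulVecLin]
  have haff : HasFDerivAt (fun y : Fin n → ℝ => (fun m => w m + s * M.mulVec y m)) T u := by
    have h1 : HasFDerivAt (fun y : Fin n → ℝ => w + T y) T u := (T.hasFDerivAt).const_add w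
    refine h1.congr_of_eventuallyEq (Filter.Eventually.of_forall fun y => ?_)
    ext m
    simp only [Pi.add_apply, hTval]
  have hcomp : HasFDerivAt (fun y => g (fun m => w m + s * M.mulVec y m))
      (((fderiv ℝ g (fun m => w m + s * M.mulVec u m))).comp T) u := by
    have hg' := ((hg.differentiable one_ne_zero) (fun m => w m + s * M.mulVec u m)).hasFDerivAt
    exact hg'.comp u haff
  rw [hcomp.fderiv]
  have hTk : T (Pi.single k 1) = fun l => s * M l k := by
    rw [hTval]
    ext l
    congr 1
    simp [Matrix.mulVec, dotProduct, Pi.single_apply]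
  simp only [ContinuousLinearMap.coe_comp', Function.comp_apply, hTk]
  rw [clm_apply_eq_sum]
  rw [Finset.mul_sum]
  exact Finset.sum_congr rfl fun l _ => by ring

lemma contDiff_affine_mulVec {n : ℕ} (M : Matrix (Fin n) (Fin n) ℝ) (s : ℝ) (w : Fin n → ℝ) :
    ContDiff ℝ 1 (fun u : Fin n → ℝ => (fun m => s * M.mulVec u m + w m : Fin n → ℝ)) := by
  set T : (Fin n → ℝ) →L[ℝ] (Fin n → ℝ) :=
    (s • (Matrix.mulVecLin M)).toContinuousLinearMap with hT
  have hfun2 : (fun u : Fin n → ℝ => (fun m => s * M.mulVec u m + w m : Fin n → ℝ))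
      = fun u => T u + w := by
    funext u; ext m
    simp [hT, Matrix.mulVecLin]
  rw [hfun2]
  exact (T.contDiff).add contDiff_const

lemma contDiff_affine_mulVec' {n : ℕ} (M : Matrix (Fin n) (Fin n) ℝ) (s : ℝ) (w : Fin n → ℝ) :
    ContDiff ℝ 1 (fun u : Fin n → ℝ => (fun m => w m + s * M.mulVec u m : Fin n → ℝ)) := by
  set T : (Fin n → ℝ) →L[ℝ] (Fin n → ℝ) :=
    (s • (Matrix.mulVecLin M)).toContinuousLinearMap with hT
  have hfun2 : (fun u : Fin n → ℝ => (fun m => w m + s * M.mulVec u m : Fin n → ℝ))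
      = fun u => w + T u := by
    funext u; ext m
    simp [hT, Matrix.mulVecLin]
  rw [hfun2]
  exact contDiff_const.add (T.contDiff)

lemma col_abs_le {n : ℕ} (A : Matrix (Fin n) (Fin n) ℝ) (k : Fin n) :
    ∑ l, |A l k| ≤ ∑ i, ∑ j, |A i j| :=
  Finset.sum_le_sum fun l _ => Finset.single_le_sum (f := fun j => |A l j|)
    (fun j _ => abs_nonneg _) (Finset.mem_univ k)

/-- derivative in `t` of the interpolation path, coordinatewise. -/
lemma hasDerivAt_path {n : ℕ} (a b : Fin n → ℝ) (t : ℝ) (ht : 0 < t) (ht1 : t < 1) :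
    HasDerivAt (fun s : ℝ => (fun m => Real.sqrt s * a m + Real.sqrt (1 - s) * b m : Fin n → ℝ))
      (fun m => 1 / (2 * Real.sqrt t) * a m + 1 / (2 * Real.sqrt (1 - t)) * (-1) * b m) t := by
  rw [hasDerivAt_pi]
  intro m
  have h1 : HasDerivAt (fun s : ℝ => Real.sqrt s) (1 / (2 * Real.sqrt t)) t :=
    Real.hasDerivAt_sqrt (ne_of_gt ht)
  have h2 : HasDerivAt (fun s : ℝ => (1 - s)) (-1) t := by
    simpa using (hasDerivAt_id t).const_sub 1
  have h3 : HasDerivAt (fun s : ℝ => Real.sqrt (1 - s))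
      (1 / (2 * Real.sqrt (1 - t)) * -1) t :=
    (Real.hasDerivAt_sqrt (by linarith)).comp t h2
  exact (h1.mul_const (a m)).add (h3.mul_const (b m))

end InterpAux

/-- A measure `μ` on `ℝⁿ` is the law of a centered Gaussian random vector with
covariance matrix `C` iff it is the pushforward of the standard Gaussian measure
under a linear map `A` with `A * A.transpose = C`. -/
def IsCenteredGaussian (n : ℕ) (μ : Measure (Fin n → ℝ))
    (C : Matrix (Fin n) (Fin n) ℝ) : Prop :=
  ∃ A : Matrix (Fin n) (Fin n) ℝ, C = A * A.transpose ∧ μ = (stdGaussianPi n).map A.mulVec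

/-- The Hessian matrix `∇²f(x)` of a function `f : ℝⁿ → ℝ`. -/
noncomputable def hessianMatrix (n : ℕ) (f : (Fin n → ℝ) → ℝ) (x : Fin n → ℝ) :
    Matrix (Fin n) (Fin n) ℝ :=
  Matrix.of fun i j =>
    fderiv ℝ (fun y => fderiv ℝ f y (Pi.single j 1)) x (Pi.single i 1)

namespace InterpAux

variable {n : ℕ} {f : (Fin n → ℝ) → ℝ}

lemma pf_contDiff (hf : ContDiff ℝ 2 f) (i : Fin n) :
    ContDiff ℝ 1 (fun y => fderiv ℝ f y (Pi.single i 1)) :=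
  (ContinuousLinearMap.apply ℝ ℝ ((Pi.single i 1 : Fin n → ℝ))).contDiff.comp
    (hf.fderiv_right (by norm_num))

lemma pf_cont (hf : ContDiff ℝ 2 f) (i : Fin n) :
    Continuous (fun y => fderiv ℝ f y (Pi.single i 1)) :=
  (pf_contDiff hf i).continuous

lemma hessian_eq (x : Fin n → ℝ) (l i : Fin n) :
    hessianMatrix n f x l i
      = fderiv ℝ (fun y => fderiv ℝ f y (Pi.single i 1)) x (Pi.single l 1) := rfl

lemma hessian_cont (hf : ContDiff ℝ 2 f) (l i : Fin n) :
    Continuous fun x => hessianMatrix n f x l i := by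
  have h1 : Continuous fun x => fderiv ℝ (fun y => fderiv ℝ f y (Pi.single i 1)) x :=
    (pf_contDiff hf i).continuous_fderiv one_ne_zero
  exact ((ContinuousLinearMap.apply ℝ ℝ ((Pi.single l 1 : Fin n → ℝ))).continuous).comp h1

lemma trace_mul_eq (D : Matrix (Fin n) (Fin n) ℝ) (H : Matrix (Fin n) (Fin n) ℝ) :
    Matrix.trace (D * H) = ∑ i, ∑ l, D i l * H l i := by
  simp [Matrix.trace, Matrix.mul_apply, Matrix.diag]

lemma abs_trace_mul_le (D H : Matrix (Fin n) (Fin n) ℝ) (φ : ℝ)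
    (hb : ∀ l i, |H l i| ≤ φ) (hφ : 0 ≤ φ) :
    |Matrix.trace (D * H)| ≤ (∑ i, ∑ l, |D i l|) * φ := by
  rw [trace_mul_eq]
  calc |∑ i, ∑ l, D i l * H l i| ≤ ∑ i, |∑ l, D i l * H l i| := Finset.abs_sum_le_sum_abs _ _
    _ ≤ ∑ i, ∑ l, |D i l * H l i| :=
        Finset.sum_le_sum fun i _ => Finset.abs_sum_le_sum_abs _ _
    _ ≤ ∑ i, ∑ l, |D i l| * φ := by
        refine Finset.sum_le_sum fun i _ => Finset.sum_le_sum fun l _ => ?_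
        rw [abs_mul]
        exact mul_le_mul_of_nonneg_left (hb l i) (abs_nonneg _)
    _ = (∑ i, ∑ l, |D i l|) * φ := by rw [Finset.sum_mul]; simp [Finset.sum_mul]

lemma sum_abs_mulVec_le (A : Matrix (Fin n) (Fin n) ℝ) (u : Fin n → ℝ) :
    ∑ i, |A.mulVec u i| ≤ (∑ i', ∑ j', |A i' j'|) * ∑ j, |u j| := by
  calc ∑ i, |A.mulVec u i| ≤ ∑ i, ∑ j, |A i j| * |u j| := by
        refine Finset.sum_le_sum fun i _ => ?_
        have h0 : A.mulVec u i = ∑ j, A i j * u j := by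
          simp [Matrix.mulVec, dotProduct]
        rw [h0]
        calc |∑ j, A i j * u j| ≤ ∑ j, |A i j * u j| := Finset.abs_sum_le_sum_abs _ _
          _ = ∑ j, |A i j| * |u j| := by simp [abs_mul]
    _ ≤ ∑ i, ∑ j, |A i j| * ∑ j', |u j'| := by
        refine Finset.sum_le_sum fun i _ => Finset.sum_le_sum fun j _ => ?_
        exact mul_le_mul_of_nonneg_left (Finset.single_le_sum (f := fun j' => |u j'|)
          (fun j' _ => abs_nonneg _) (Finset.mem_univ j)) (abs_nonneg _)
    _ = (∑ i', ∑ j', |A i' j'|) * ∑ j, |u j| := by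
        rw [Finset.sum_mul]
        exact Finset.sum_congr rfl fun i _ => by rw [Finset.sum_mul]

lemma abs_le_exp_sum (x : Fin n → ℝ) : ∑ j, |x j| ≤ Real.exp (∑ j, |x j|) :=
  (Real.add_one_le_exp _).trans' (by
    have : (0:ℝ) ≤ ∑ j, |x j| := Finset.sum_nonneg fun j _ => abs_nonneg _
    linarith)

end InterpAux

open InterpAux

/-- **Interpolation method.** For `X, Y` independent centered Gaussian vectors with
covariances `C^X, C^Y` and `f` a `C²` function whose value and first and second
partial derivatives are bounded by `exp (λ (1 + |x|))`,
`E[f(Y)] − E[f(X)] = ½ ∫₀¹ E[Tr((C^Y − C^X) ∇²f(√t X + √(1−t) Y))] dt`. -/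
theorem interpolation_method (n : ℕ) (μX μY : Measure (Fin n → ℝ))
    (CX CY : Matrix (Fin n) (Fin n) ℝ)
    (hX : IsCenteredGaussian n μX CX) (hY : IsCenteredGaussian n μY CY)
    (f : (Fin n → ℝ) → ℝ) (hf : ContDiff ℝ 2 f)
    (lam : ℝ) (hlam : 0 ≤ lam)
    (hbound : ∀ x : Fin n → ℝ,
      |f x| ≤ Real.exp (lam * (1 + Real.sqrt (∑ m, (x m) ^ 2))) ∧
      (∀ i, |fderiv ℝ f x (Pi.single i 1)| ≤
        Real.exp (lam * (1 + Real.sqrt (∑ m, (x m) ^ 2)))) ∧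
      (∀ i j, |hessianMatrix n f x i j| ≤
        Real.exp (lam * (1 + Real.sqrt (∑ m, (x m) ^ 2))))) :
    (∫ y, f y ∂μY) - (∫ x, f x ∂μX)
      = (1 / 2) * ∫ t in (0:ℝ)..1,
          ∫ p : (Fin n → ℝ) × (Fin n → ℝ),
            Matrix.trace ((CY - CX) *
              hessianMatrix n f
                (fun m => Real.sqrt t * p.1 m + Real.sqrt (1 - t) * p.2 m))
            ∂(μX.prod μY) := by
  classical
  obtain ⟨A, hCA, hmA⟩ := hX
  obtain ⟨B, hCB, hmB⟩ := hY
  have hf1 : ContDiff ℝ 1 f := hf.of_le (by norm_num)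
  have hAc : Continuous fun u : Fin n → ℝ => A.mulVec u := mulVec_continuous A
  have hBc : Continuous fun u : Fin n → ℝ => B.mulVec u := mulVec_continuous B
  set γ2 : Measure ((Fin n → ℝ) × (Fin n → ℝ)) :=
    (stdGaussianPi n).prod (stdGaussianPi n) with hγ2
  set Φ : (Fin n → ℝ) → ℝ :=
    fun x => Real.exp (lam * (1 + Real.sqrt (∑ m, (x m) ^ 2))) with hΦ
  have hΦpos : ∀ x, 0 < Φ x := fun x => Real.exp_pos _
  have hb0 : ∀ x, |f x| ≤ Φ x := fun x => (hbound x).1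
  have hb1 : ∀ x i, |fderiv ℝ f x (Pi.single i 1)| ≤ Φ x := fun x i => (hbound x).2.1 i
  have hb2 : ∀ x l i, |hessianMatrix n f x l i| ≤ Φ x := fun x l i => (hbound x).2.2 l i
  set SA : ℝ := ∑ i, ∑ j, |A i j| with hSA
  set SB : ℝ := ∑ i, ∑ j, |B i j| with hSB
  have hSA0 : 0 ≤ SA := Finset.sum_nonneg fun i _ => Finset.sum_nonneg fun j _ => abs_nonneg _
  have hSB0 : 0 ≤ SB := Finset.sum_nonneg fun i _ => Finset.sum_nonneg fun j _ => abs_nonneg _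
  set xt : ℝ → ((Fin n → ℝ) × (Fin n → ℝ)) → (Fin n → ℝ) :=
    fun t p => fun m => Real.sqrt t * A.mulVec p.1 m + Real.sqrt (1 - t) * B.mulVec p.2 m
    with hxt
  have hsq : ∀ t : ℝ, t ≤ 1 → Real.sqrt t ≤ 1 := by
    intro t h1
    rw [show (1:ℝ) = Real.sqrt 1 by simp]
    exact Real.sqrt_le_sqrt h1
  have hsum_xt : ∀ (t : ℝ) p, Real.sqrt t ≤ 1 → Real.sqrt (1-t) ≤ 1 →
      ∑ m, |xt t p m| ≤ SA * ∑ j, |p.1 j| + SB * ∑ j, |p.2 j| := by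
    intro t p h1 h2
    calc ∑ m, |xt t p m| ≤ ∑ m, (|A.mulVec p.1 m| + |B.mulVec p.2 m|) := by
          refine Finset.sum_le_sum fun m _ => ?_
          calc |xt t p m| ≤ |Real.sqrt t * A.mulVec p.1 m|
                + |Real.sqrt (1-t) * B.mulVec p.2 m| := abs_add_le _ _
            _ = Real.sqrt t * |A.mulVec p.1 m| + Real.sqrt (1-t) * |B.mulVec p.2 m| := by
                rw [abs_mul, abs_mul, abs_of_nonneg (Real.sqrt_nonneg _),
                  abs_of_nonneg (Real.sqrt_nonneg _)]
            _ ≤ 1 * |A.mulVec p.1 m| + 1 * |B.mulVec p.2 m| :=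
                add_le_add (mul_le_mul_of_nonneg_right h1 (abs_nonneg _))
                  (mul_le_mul_of_nonneg_right h2 (abs_nonneg _))
            _ = |A.mulVec p.1 m| + |B.mulVec p.2 m| := by ring
      _ = (∑ m, |A.mulVec p.1 m|) + ∑ m, |B.mulVec p.2 m| := Finset.sum_add_distrib
      _ ≤ SA * ∑ j, |p.1 j| + SB * ∑ j, |p.2 j| :=
          add_le_add (sum_abs_mulVec_le A p.1) (sum_abs_mulVec_le B p.2)
  have hΦxt : ∀ (t : ℝ) p, Real.sqrt t ≤ 1 → Real.sqrt (1-t) ≤ 1 →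
      Φ (xt t p) ≤ Real.exp lam *
        (Real.exp ((lam * SA) * ∑ j, |p.1 j|) * Real.exp ((lam * SB) * ∑ j, |p.2 j|)) := by
    intro t p h1 h2
    calc Φ (xt t p)
        ≤ Real.exp (lam * (1 + (SA * ∑ j, |p.1 j| + SB * ∑ j, |p.2 j|))) := by
          apply Real.exp_le_exp.2
          apply mul_le_mul_of_nonneg_left _ hlam
          have h3 := (sqrt_sum_sq_le (xt t p)).trans (hsum_xt t p h1 h2)
          linarith
      _ = Real.exp lam * (Real.exp ((lam*SA) * ∑ j, |p.1 j|)
            * Real.exp ((lam*SB) * ∑ j, |p.2 j|)) := by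
          rw [← Real.exp_add, ← Real.exp_add]
          ring_nf
  have hIntTool : ∀ (q : ((Fin n → ℝ) × (Fin n → ℝ)) → ℝ), Continuous q →
      ∀ (C c1 c2 : ℝ), (∀ p, |q p| ≤ C * (Real.exp (c1 * ∑ j, |p.1 j|)
        * Real.exp (c2 * ∑ j, |p.2 j|))) → Integrable q γ2 := by
    intro q hq C c1 c2 hb
    refine Integrable.mono' (((integrable_exp_sum_abs n c1).mul_prod
      (integrable_exp_sum_abs n c2)).const_mul C) hq.aestronglyMeasurable
      (ae_of_all _ fun p => ?_)
    rw [Real.norm_eq_abs]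
    exact hb p
  have hxt_contp : ∀ t, Continuous fun p : (Fin n → ℝ) × (Fin n → ℝ) => xt t p := by
    intro t
    apply continuous_pi
    intro m
    exact (continuous_const.mul (((continuous_apply m).comp hAc).comp continuous_fst)).add
      (continuous_const.mul (((continuous_apply m).comp hBc).comp continuous_snd))
  have hxt_contt : ∀ p, Continuous fun t : ℝ => xt t p := by
    intro p
    apply continuous_pi
    intro m
    exact ((Real.continuous_sqrt).mul continuous_const).add
      (((Real.continuous_sqrt).comp (continuous_const.sub continuous_id)).mul continuous_const)
  have hf_xt_int : ∀ t : ℝ, 0 ≤ t → t ≤ 1 → Integrable (fun p => f (xt t p)) γ2 := by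
    intro t h0 h1
    exact hIntTool _ (hf.continuous.comp (hxt_contp t)) (Real.exp lam) (lam*SA) (lam*SB)
      (fun p => (hb0 _).trans (hΦxt t p (hsq t h1) (hsq _ (by linarith))))
  have hH_int : ∀ t : ℝ, 0 ≤ t → t ≤ 1 → ∀ l i,
      Integrable (fun p => hessianMatrix n f (xt t p) l i) γ2 := by
    intro t h0 h1 l i
    exact hIntTool _ ((hessian_cont hf l i).comp (hxt_contp t)) (Real.exp lam) (lam*SA)
      (lam*SB) (fun p => (hb2 _ l i).trans (hΦxt t p (hsq t h1) (hsq _ (by linarith))))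
  set D : Matrix (Fin n) (Fin n) ℝ := CY - CX with hD
  set KD : ℝ := ∑ i, ∑ l, |D i l| with hKD
  have hKD0 : 0 ≤ KD := Finset.sum_nonneg fun i _ => Finset.sum_nonneg fun l _ => abs_nonneg _
  have htrc : Continuous fun x => Matrix.trace (D * hessianMatrix n f x) := by
    have he : (fun x => Matrix.trace (D * hessianMatrix n f x))
        = fun x => ∑ i, ∑ l, D i l * (hessianMatrix n f x l i) :=
      funext fun x => trace_mul_eq _ _
    rw [he]
    exact continuous_finset_sum _ fun i _ => continuous_finset_sum _ fun l _ =>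
      continuous_const.mul (hessian_cont hf l i)
  have htr_int : ∀ t : ℝ, 0 ≤ t → t ≤ 1 →
      Integrable (fun p => Matrix.trace (D * hessianMatrix n f (xt t p))) γ2 := by
    intro t h0 h1
    refine hIntTool _ (htrc.comp (hxt_contp t)) (KD * Real.exp lam) (lam*SA) (lam*SB)
      fun p => ?_
    calc |Matrix.trace (D * hessianMatrix n f (xt t p))| ≤ KD * Φ (xt t p) :=
          abs_trace_mul_le D _ _ (fun l i => hb2 _ l i) (hΦpos _).le
      _ ≤ KD * (Real.exp lam * (Real.exp ((lam*SA) * ∑ j, |p.1 j|)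
            * Real.exp ((lam*SB) * ∑ j, |p.2 j|))) :=
          mul_le_mul_of_nonneg_left (hΦxt t p (hsq t h1) (hsq _ (by linarith))) hKD0
      _ = (KD * Real.exp lam) * (Real.exp ((lam*SA) * ∑ j, |p.1 j|)
            * Real.exp ((lam*SB) * ∑ j, |p.2 j|)) := by ring
  set F : ℝ → ℝ := fun t => ∫ p, f (xt t p) ∂γ2 with hFdef
  set G : ℝ → ℝ := fun t => ∫ p, Matrix.trace (D * hessianMatrix n f (xt t p)) ∂γ2 with hGdef
  -- boundary values
  have hF1 : F 1 = ∫ x, f x ∂μX := by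
    have h1 : ∀ p : (Fin n → ℝ) × (Fin n → ℝ), xt 1 p = A.mulVec p.1 := by
      intro p
      ext m
      simp [hxt]
    have hm1 : AEStronglyMeasurable (fun u : Fin n → ℝ => f (A.mulVec u))
        (γ2.map Prod.fst) := (hf.continuous.comp hAc).aestronglyMeasurable
    have hm2 : AEStronglyMeasurable f ((stdGaussianPi n).map A.mulVec) :=
      hf.continuous.aestronglyMeasurable
    calc F 1 = ∫ p, f (A.mulVec p.1) ∂γ2 := by
          apply integral_congr_ae
          filter_upwards with p
          rw [h1 p]
      _ = ∫ u, f (A.mulVec u) ∂(γ2.map Prod.fst) :=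
          (integral_map measurable_fst.aemeasurable hm1).symm
      _ = ∫ u, f (A.mulVec u) ∂(stdGaussianPi n) := by
          rw [show γ2.map Prod.fst = stdGaussianPi n from Measure.fst_prod]
      _ = ∫ x, f x ∂((stdGaussianPi n).map A.mulVec) :=
          (integral_map hAc.measurable.aemeasurable hm2).symm
      _ = ∫ x, f x ∂μX := by rw [← hmA]
  have hF0 : F 0 = ∫ y, f y ∂μY := by
    have h1 : ∀ p : (Fin n → ℝ) × (Fin n → ℝ), xt 0 p = B.mulVec p.2 := by
      intro p
      ext m
      simp [hxt]
    have hm1 : AEStronglyMeasurable (fun u : Fin n → ℝ => f (B.mulVec u))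
        (γ2.map Prod.snd) := (hf.continuous.comp hBc).aestronglyMeasurable
    have hm2 : AEStronglyMeasurable f ((stdGaussianPi n).map B.mulVec) :=
      hf.continuous.aestronglyMeasurable
    calc F 0 = ∫ p, f (B.mulVec p.2) ∂γ2 := by
          apply integral_congr_ae
          filter_upwards with p
          rw [h1 p]
      _ = ∫ u, f (B.mulVec u) ∂(γ2.map Prod.snd) :=
          (integral_map measurable_snd.aemeasurable hm1).symm
      _ = ∫ u, f (B.mulVec u) ∂(stdGaussianPi n) := by
          rw [show γ2.map Prod.snd = stdGaussianPi n from Measure.snd_prod]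
      _ = ∫ y, f y ∂((stdGaussianPi n).map B.mulVec) :=
          (integral_map hBc.measurable.aemeasurable hm2).symm
      _ = ∫ y, f y ∂μY := by rw [← hmB]
  -- identification of G with the statement's inner integral
  have hprodmap : μX.prod μY = γ2.map (Prod.map A.mulVec B.mulVec) := by
    rw [hmA, hmB]
    exact Measure.map_prod_map _ _ hAc.measurable hBc.measurable
  have hGt : ∀ t : ℝ,
      (∫ p : (Fin n → ℝ) × (Fin n → ℝ), Matrix.trace (D * hessianMatrix n f
        (fun m => Real.sqrt t * p.1 m + Real.sqrt (1 - t) * p.2 m)) ∂(μX.prod μY)) = G t := by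
    intro t
    have hic : Continuous fun p : (Fin n → ℝ) × (Fin n → ℝ) =>
        (fun m => Real.sqrt t * p.1 m + Real.sqrt (1 - t) * p.2 m : Fin n → ℝ) := by
      apply continuous_pi
      intro m
      exact (continuous_const.mul ((continuous_apply m).comp continuous_fst)).add
        (continuous_const.mul ((continuous_apply m).comp continuous_snd))
    have hm1 : AEStronglyMeasurable (fun p : (Fin n → ℝ) × (Fin n → ℝ) =>
        Matrix.trace (D * hessianMatrix n f
          (fun m => Real.sqrt t * p.1 m + Real.sqrt (1 - t) * p.2 m)))
        (γ2.map (Prod.map A.mulVec B.mulVec)) := (htrc.comp hic).aestronglyMeasurable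
    rw [hprodmap, integral_map (hAc.measurable.prodMap hBc.measurable).aemeasurable hm1]
    rfl
  -- continuity of F and G on [0,1]
  have hFcont : ContinuousOn F (Set.Icc 0 1) := by
    apply continuousOn_of_dominated (bound := fun p : (Fin n → ℝ) × (Fin n → ℝ) =>
      Real.exp lam * (Real.exp ((lam*SA) * ∑ j, |p.1 j|) * Real.exp ((lam*SB) * ∑ j, |p.2 j|)))
    · intro t _
      exact (hf.continuous.comp (hxt_contp t)).aestronglyMeasurable
    · intro t ht
      refine ae_of_all _ fun p => ?_
      rw [Real.norm_eq_abs]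
      exact (hb0 _).trans (hΦxt t p (hsq t ht.2) (hsq _ (by linarith [ht.1])))
    · exact (((integrable_exp_sum_abs n _).mul_prod (integrable_exp_sum_abs n _)).const_mul _)
    · exact ae_of_all _ fun p => (hf.continuous.comp (hxt_contt p)).continuousOn
  have hGcont : ContinuousOn G (Set.Icc 0 1) := by
    apply continuousOn_of_dominated (bound := fun p : (Fin n → ℝ) × (Fin n → ℝ) =>
      (KD * Real.exp lam) * (Real.exp ((lam*SA) * ∑ j, |p.1 j|)
        * Real.exp ((lam*SB) * ∑ j, |p.2 j|)))
    · intro t _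
      exact ((htrc.comp (hxt_contp t))).aestronglyMeasurable
    · intro t ht
      refine ae_of_all _ fun p => ?_
      rw [Real.norm_eq_abs]
      calc |Matrix.trace (D * hessianMatrix n f (xt t p))| ≤ KD * Φ (xt t p) :=
            abs_trace_mul_le D _ _ (fun l i => hb2 _ l i) (hΦpos _).le
        _ ≤ KD * (Real.exp lam * (Real.exp ((lam*SA) * ∑ j, |p.1 j|)
              * Real.exp ((lam*SB) * ∑ j, |p.2 j|))) :=
            mul_le_mul_of_nonneg_left (hΦxt t p (hsq t ht.2) (hsq _ (by linarith [ht.1]))) hKD0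
        _ = (KD * Real.exp lam) * (Real.exp ((lam*SA) * ∑ j, |p.1 j|)
              * Real.exp ((lam*SB) * ∑ j, |p.2 j|)) := by ring
    · exact (((integrable_exp_sum_abs n _).mul_prod (integrable_exp_sum_abs n _)).const_mul _)
    · refine ae_of_all _ fun p => ?_
      exact ((htrc.comp (hxt_contt p))).continuousOn
  -- the derivative
  have hderiv : ∀ t ∈ Set.Ioo (0:ℝ) 1, HasDerivAt F (-(1/2) * G t) t := by
    rintro t ⟨ht0, ht1⟩
    have hδ0 : (0:ℝ) < t/2 := by linarith
    have hδ'0 : (0:ℝ) < (1-t)/2 := by linarith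
    set ε : ℝ := min (t/2) ((1-t)/2) with hε
    have hε0 : 0 < ε := lt_min hδ0 hδ'0
    have hball : ∀ s ∈ Metric.ball t ε, t/2 ≤ s ∧ s ≤ 1 ∧ (1-t)/2 ≤ 1 - s ∧ 0 < s ∧ s < 1 := by
      intro s hs
      rw [Metric.mem_ball, Real.dist_eq] at hs
      have h1 := abs_lt.1 hs
      have h2 : ε ≤ t/2 := min_le_left _ _
      have h3 : ε ≤ (1-t)/2 := min_le_right _ _
      refine ⟨by linarith, by linarith, by linarith, by linarith, by linarith⟩
    set dxt : ℝ → ((Fin n → ℝ) × (Fin n → ℝ)) → Fin n → ℝ := fun s p =>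
      fun m => 1 / (2 * Real.sqrt s) * A.mulVec p.1 m
        + 1 / (2 * Real.sqrt (1 - s)) * (-1) * B.mulVec p.2 m with hdxt
    set Cb : ℝ := Real.exp lam * (1 / (2 * Real.sqrt (t/2)) * SA
      + 1 / (2 * Real.sqrt ((1-t)/2)) * SB) with hCb
    have hsqδ : (0:ℝ) < Real.sqrt (t/2) := Real.sqrt_pos.2 hδ0
    have hsqδ' : (0:ℝ) < Real.sqrt ((1-t)/2) := Real.sqrt_pos.2 hδ'0
    -- pointwise derivative in t
    have hptderiv : ∀ (p : (Fin n → ℝ) × (Fin n → ℝ)) (s : ℝ), 0 < s → s < 1 →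
        HasDerivAt (fun s' => f (xt s' p)) (fderiv ℝ f (xt s p) (dxt s p)) s := by
      intro p s hs0 hs1
      have hpath := hasDerivAt_path (A.mulVec p.1) (B.mulVec p.2) s hs0 hs1
      have hfd := ((hf1.differentiable one_ne_zero) (xt s p)).hasFDerivAt
      exact hfd.comp_hasDerivAt s hpath
    -- uniform bound on the derivative over the ball
    have hbnd : ∀ s ∈ Metric.ball t ε, ∀ p : (Fin n → ℝ) × (Fin n → ℝ),
        |fderiv ℝ f (xt s p) (dxt s p)| ≤
          Cb * (Real.exp ((lam*SA+1) * ∑ j, |p.1 j|)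
            * Real.exp ((lam*SB+1) * ∑ j, |p.2 j|)) := by
      intro s hs p
      obtain ⟨hds, hs1, hd's, hs0, hs1'⟩ := hball s hs
      have ha1 : 1 / (2 * Real.sqrt s) ≤ 1 / (2 * Real.sqrt (t/2)) := by
        apply one_div_le_one_div_of_le (by linarith)
        have := Real.sqrt_le_sqrt hds
        linarith
      have ha2 : 1 / (2 * Real.sqrt (1-s)) ≤ 1 / (2 * Real.sqrt ((1-t)/2)) := by
        apply one_div_le_one_div_of_le (by linarith)
        have := Real.sqrt_le_sqrt hd's
        linarith
      have ha1' : (0:ℝ) ≤ 1 / (2 * Real.sqrt s) := by positivity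
      have ha2' : (0:ℝ) ≤ 1 / (2 * Real.sqrt (1-s)) := by positivity
      set su := ∑ j, |p.1 j| with hsu
      set sv := ∑ j, |p.2 j| with hsv
      have hsu0 : 0 ≤ su := Finset.sum_nonneg fun j _ => abs_nonneg _
      have hsv0 : 0 ≤ sv := Finset.sum_nonneg fun j _ => abs_nonneg _
      have hesu : su ≤ Real.exp su * Real.exp sv := by
        calc su ≤ Real.exp su := by linarith [Real.add_one_le_exp su]
          _ ≤ Real.exp su * Real.exp sv :=
            le_mul_of_one_le_right (Real.exp_nonneg _) (Real.one_le_exp hsv0)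
      have hesv : sv ≤ Real.exp su * Real.exp sv := by
        calc sv ≤ Real.exp sv := by linarith [Real.add_one_le_exp sv]
          _ ≤ Real.exp su * Real.exp sv :=
            le_mul_of_one_le_left (Real.exp_nonneg _) (Real.one_le_exp hsu0)
      have key1 : ∑ i, |dxt s p i| ≤ 1 / (2 * Real.sqrt (t/2)) * (SA * su)
          + 1 / (2 * Real.sqrt ((1-t)/2)) * (SB * sv) := by
        calc ∑ i, |dxt s p i|
            ≤ ∑ i, (1 / (2 * Real.sqrt s) * |A.mulVec p.1 i|
                + 1 / (2 * Real.sqrt (1-s)) * |B.mulVec p.2 i|) := by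
              refine Finset.sum_le_sum fun i _ => ?_
              calc |dxt s p i| ≤ |1 / (2 * Real.sqrt s) * A.mulVec p.1 i|
                    + |1 / (2 * Real.sqrt (1-s)) * (-1) * B.mulVec p.2 i| := abs_add_le _ _
                _ = 1 / (2 * Real.sqrt s) * |A.mulVec p.1 i|
                    + 1 / (2 * Real.sqrt (1-s)) * |B.mulVec p.2 i| := by
                    rw [abs_mul, abs_mul, abs_of_nonneg ha1', abs_mul]
                    simp only [abs_neg, abs_one, mul_one]
                    rw [abs_of_nonneg ha2']
            _ = 1 / (2 * Real.sqrt s) * ∑ i, |A.mulVec p.1 i|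
                + 1 / (2 * Real.sqrt (1-s)) * ∑ i, |B.mulVec p.2 i| := by
              rw [Finset.sum_add_distrib, ← Finset.mul_sum, ← Finset.mul_sum]
            _ ≤ 1 / (2 * Real.sqrt s) * (SA * su) + 1 / (2 * Real.sqrt (1-s)) * (SB * sv) :=
              add_le_add (mul_le_mul_of_nonneg_left (sum_abs_mulVec_le A p.1) ha1')
                (mul_le_mul_of_nonneg_left (sum_abs_mulVec_le B p.2) ha2')
            _ ≤ 1 / (2 * Real.sqrt (t/2)) * (SA * su)
                + 1 / (2 * Real.sqrt ((1-t)/2)) * (SB * sv) :=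
              add_le_add (mul_le_mul_of_nonneg_right ha1 (by positivity))
                (mul_le_mul_of_nonneg_right ha2 (by positivity))
      have key2 : |fderiv ℝ f (xt s p) (dxt s p)| ≤ (∑ i, |dxt s p i|) * Φ (xt s p) :=
        abs_clm_apply_le _ _ _ (fun i => hb1 _ i) (hΦpos _).le
      have key3 : Φ (xt s p) ≤ Real.exp lam *
          (Real.exp ((lam*SA) * su) * Real.exp ((lam*SB) * sv)) :=
        hΦxt s p (hsq s hs1) (hsq _ (by linarith))
      have hsum0 : 0 ≤ ∑ i, |dxt s p i| := Finset.sum_nonneg fun i _ => abs_nonneg _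
      set a1 : ℝ := 1 / (2 * Real.sqrt (t/2)) with ha1d
      set a2 : ℝ := 1 / (2 * Real.sqrt ((1-t)/2)) with ha2d
      have ha10 : 0 ≤ a1 := by positivity
      have ha20 : 0 ≤ a2 := by positivity
      calc |fderiv ℝ f (xt s p) (dxt s p)| ≤ (∑ i, |dxt s p i|) * Φ (xt s p) := key2
        _ ≤ (a1 * (SA * su) + a2 * (SB * sv)) * Φ (xt s p) :=
            mul_le_mul_of_nonneg_right key1 (hΦpos _).le
        _ ≤ (a1 * (SA * su) + a2 * (SB * sv)) * (Real.exp lam *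
            (Real.exp ((lam*SA) * su) * Real.exp ((lam*SB) * sv))) :=
            mul_le_mul_of_nonneg_left key3
              (by positivity)
        _ ≤ ((a1 * SA + a2 * SB) * (Real.exp su * Real.exp sv)) * (Real.exp lam *
            (Real.exp ((lam*SA) * su) * Real.exp ((lam*SB) * sv))) := by
            apply mul_le_mul_of_nonneg_right _ (by positivity)
            have e1 : a1 * (SA * su) ≤ a1 * SA * (Real.exp su * Real.exp sv) := by
              rw [mul_assoc]
              exact mul_le_mul_of_nonneg_left
                (mul_le_mul_of_nonneg_left hesu hSA0) ha10
            have e2 : a2 * (SB * sv) ≤ a2 * SB * (Real.exp su * Real.exp sv) := by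
              rw [mul_assoc]
              exact mul_le_mul_of_nonneg_left
                (mul_le_mul_of_nonneg_left hesv hSB0) ha20
            calc a1 * (SA * su) + a2 * (SB * sv)
                ≤ a1 * SA * (Real.exp su * Real.exp sv)
                  + a2 * SB * (Real.exp su * Real.exp sv) := add_le_add e1 e2
              _ = (a1 * SA + a2 * SB) * (Real.exp su * Real.exp sv) := by ring
        _ = Cb * (Real.exp ((lam*SA+1) * su) * Real.exp ((lam*SB+1) * sv)) := by
            rw [show (lam*SA+1) * su = (lam*SA) * su + su by ring, Real.exp_add,
              show (lam*SB+1) * sv = (lam*SB) * sv + sv by ring, Real.exp_add, hCb]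
            ring
    -- apply the dominated-derivative theorem
    have hdxtcont : Continuous fun p : (Fin n → ℝ) × (Fin n → ℝ) => dxt t p := by
      apply continuous_pi
      intro m
      exact (continuous_const.mul (((continuous_apply m).comp hAc).comp continuous_fst)).add
        (continuous_const.mul (((continuous_apply m).comp hBc).comp continuous_snd))
    have hF'cont : Continuous fun p : (Fin n → ℝ) × (Fin n → ℝ) =>
        fderiv ℝ f (xt t p) (dxt t p) := by
      have h1 : Continuous fun p : (Fin n → ℝ) × (Fin n → ℝ) => fderiv ℝ f (xt t p) :=
        (hf1.continuous_fderiv one_ne_zero).comp (hxt_contp t)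
      exact h1.clm_apply hdxtcont
    have key := hasDerivAt_integral_of_dominated_loc_of_deriv_le (μ := γ2)
      (F := fun s p => f (xt s p))
      (F' := fun s p => fderiv ℝ f (xt s p) (dxt s p))
      (bound := fun p => Cb * (Real.exp ((lam*SA+1) * ∑ j, |p.1 j|)
        * Real.exp ((lam*SB+1) * ∑ j, |p.2 j|)))
      (Metric.ball_mem_nhds t hε0)
      (Filter.Eventually.of_forall fun s =>
        (hf.continuous.comp (hxt_contp s)).aestronglyMeasurable)
      (hf_xt_int t ht0.le ht1.le)
      hF'cont.aestronglyMeasurable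
      (ae_of_all _ fun p s hs => by
        rw [Real.norm_eq_abs]
        exact hbnd s hs p)
      ((((integrable_exp_sum_abs n _).mul_prod (integrable_exp_sum_abs n _)).const_mul _))
      (ae_of_all _ fun p s hs => hptderiv p s (hball s hs).2.2.2.1 (hball s hs).2.2.2.2)
    have hval : (∫ p, fderiv ℝ f (xt t p) (dxt t p) ∂γ2) = -(1/2) * G t := by
      have hsqt0 : (0:ℝ) < Real.sqrt t := Real.sqrt_pos.2 ht0
      have hsq1t0 : (0:ℝ) < Real.sqrt (1-t) := Real.sqrt_pos.2 (by linarith)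
      have hst1 : Real.sqrt t ≤ 1 := hsq t ht1.le
      have hs1t1 : Real.sqrt (1-t) ≤ 1 := hsq _ (by linarith)
      set Ili : Fin n → Fin n → ℝ :=
        fun l i => ∫ p, hessianMatrix n f (xt t p) l i ∂γ2 with hIli
      -- integrability of coordinate-times-partial integrands
      have hexp_le : ∀ x : Fin n → ℝ, (∑ j, |x j|) ≤ Real.exp (∑ j, |x j|) := by
        intro x
        have h0 : (0:ℝ) ≤ ∑ j, |x j| := Finset.sum_nonneg fun j _ => abs_nonneg _
        linarith [Real.add_one_le_exp (∑ j, |x j|)]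
      have hu_int : ∀ k i, Integrable
          (fun p => p.1 k * fderiv ℝ f (xt t p) (Pi.single i 1)) γ2 := by
        intro k i
        refine hIntTool _ ((((continuous_apply k).comp continuous_fst)).mul
          ((pf_cont hf i).comp (hxt_contp t))) (Real.exp lam) (lam*SA+1) (lam*SB) fun p => ?_
        rw [abs_mul]
        have h1 : |p.1 k| ≤ Real.exp (∑ j, |p.1 j|) :=
          (Finset.single_le_sum (f := fun j => |p.1 j|) (fun j _ => abs_nonneg _)
            (Finset.mem_univ k)).trans (hexp_le p.1)
        calc |p.1 k| * |fderiv ℝ f (xt t p) (Pi.single i 1)|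
            ≤ Real.exp (∑ j, |p.1 j|) * Φ (xt t p) :=
              mul_le_mul h1 (hb1 _ i) (abs_nonneg _) (Real.exp_nonneg _)
          _ ≤ Real.exp (∑ j, |p.1 j|) * (Real.exp lam * (Real.exp ((lam*SA) * ∑ j, |p.1 j|)
                * Real.exp ((lam*SB) * ∑ j, |p.2 j|))) :=
              mul_le_mul_of_nonneg_left (hΦxt t p hst1 hs1t1) (Real.exp_nonneg _)
          _ = Real.exp lam * (Real.exp ((lam*SA+1) * ∑ j, |p.1 j|)
                * Real.exp ((lam*SB) * ∑ j, |p.2 j|)) := by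
              rw [show (lam*SA+1) * ∑ j, |p.1 j| = (lam*SA) * ∑ j, |p.1 j| + ∑ j, |p.1 j|
                by ring, Real.exp_add]
              ring
      have hv_int : ∀ k i, Integrable
          (fun p => p.2 k * fderiv ℝ f (xt t p) (Pi.single i 1)) γ2 := by
        intro k i
        refine hIntTool _ ((((continuous_apply k).comp continuous_snd)).mul
          ((pf_cont hf i).comp (hxt_contp t))) (Real.exp lam) (lam*SA) (lam*SB+1) fun p => ?_
        rw [abs_mul]
        have h1 : |p.2 k| ≤ Real.exp (∑ j, |p.2 j|) :=
          (Finset.single_le_sum (f := fun j => |p.2 j|) (fun j _ => abs_nonneg _)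
            (Finset.mem_univ k)).trans (hexp_le p.2)
        calc |p.2 k| * |fderiv ℝ f (xt t p) (Pi.single i 1)|
            ≤ Real.exp (∑ j, |p.2 j|) * Φ (xt t p) :=
              mul_le_mul h1 (hb1 _ i) (abs_nonneg _) (Real.exp_nonneg _)
          _ ≤ Real.exp (∑ j, |p.2 j|) * (Real.exp lam * (Real.exp ((lam*SA) * ∑ j, |p.1 j|)
                * Real.exp ((lam*SB) * ∑ j, |p.2 j|))) :=
              mul_le_mul_of_nonneg_left (hΦxt t p hst1 hs1t1) (Real.exp_nonneg _)
          _ = Real.exp lam * (Real.exp ((lam*SA) * ∑ j, |p.1 j|)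
                * Real.exp ((lam*SB+1) * ∑ j, |p.2 j|)) := by
              rw [show (lam*SB+1) * ∑ j, |p.2 j| = (lam*SB) * ∑ j, |p.2 j| + ∑ j, |p.2 j|
                by ring, Real.exp_add]
              ring
      have hterm_intA : ∀ i, Integrable
          (fun p => A.mulVec p.1 i * fderiv ℝ f (xt t p) (Pi.single i 1)) γ2 := by
        intro i
        refine hIntTool _ ((((continuous_apply i).comp (hAc.comp continuous_fst))).mul
          ((pf_cont hf i).comp (hxt_contp t))) (SA * Real.exp lam) (lam*SA+1) (lam*SB)
          fun p => ?_
        rw [abs_mul]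
        have h1 : |A.mulVec p.1 i| ≤ SA * Real.exp (∑ j, |p.1 j|) :=
          (abs_mulVec_le A p.1 i).trans (mul_le_mul_of_nonneg_left (hexp_le p.1) hSA0)
        calc |A.mulVec p.1 i| * |fderiv ℝ f (xt t p) (Pi.single i 1)|
            ≤ (SA * Real.exp (∑ j, |p.1 j|)) * Φ (xt t p) :=
              mul_le_mul h1 (hb1 _ i) (abs_nonneg _) (by positivity)
          _ ≤ (SA * Real.exp (∑ j, |p.1 j|)) * (Real.exp lam *
                (Real.exp ((lam*SA) * ∑ j, |p.1 j|)
                * Real.exp ((lam*SB) * ∑ j, |p.2 j|))) :=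
              mul_le_mul_of_nonneg_left (hΦxt t p hst1 hs1t1) (by positivity)
          _ = (SA * Real.exp lam) * (Real.exp ((lam*SA+1) * ∑ j, |p.1 j|)
                * Real.exp ((lam*SB) * ∑ j, |p.2 j|)) := by
              rw [show (lam*SA+1) * ∑ j, |p.1 j| = (lam*SA) * ∑ j, |p.1 j| + ∑ j, |p.1 j|
                by ring, Real.exp_add]
              ring
      have hterm_intB : ∀ i, Integrable
          (fun p => B.mulVec p.2 i * fderiv ℝ f (xt t p) (Pi.single i 1)) γ2 := by
        intro i
        refine hIntTool _ ((((continuous_apply i).comp (hBc.comp continuous_snd))).mul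
          ((pf_cont hf i).comp (hxt_contp t))) (SB * Real.exp lam) (lam*SA) (lam*SB+1)
          fun p => ?_
        rw [abs_mul]
        have h1 : |B.mulVec p.2 i| ≤ SB * Real.exp (∑ j, |p.2 j|) :=
          (abs_mulVec_le B p.2 i).trans (mul_le_mul_of_nonneg_left (hexp_le p.2) hSB0)
        calc |B.mulVec p.2 i| * |fderiv ℝ f (xt t p) (Pi.single i 1)|
            ≤ (SB * Real.exp (∑ j, |p.2 j|)) * Φ (xt t p) :=
              mul_le_mul h1 (hb1 _ i) (abs_nonneg _) (by positivity)
          _ ≤ (SB * Real.exp (∑ j, |p.2 j|)) * (Real.exp lam *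
                (Real.exp ((lam*SA) * ∑ j, |p.1 j|)
                * Real.exp ((lam*SB) * ∑ j, |p.2 j|))) :=
              mul_le_mul_of_nonneg_left (hΦxt t p hst1 hs1t1) (by positivity)
          _ = (SB * Real.exp lam) * (Real.exp ((lam*SA) * ∑ j, |p.1 j|)
                * Real.exp ((lam*SB+1) * ∑ j, |p.2 j|)) := by
              rw [show (lam*SB+1) * ∑ j, |p.2 j| = (lam*SB) * ∑ j, |p.2 j| + ∑ j, |p.2 j|
                by ring, Real.exp_add]
              ring
      -- the two IBP identities
      have hIBP_A : ∀ i k, (∫ p, p.1 k * fderiv ℝ f (xt t p) (Pi.single i 1) ∂γ2)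
          = Real.sqrt t * ∑ l, A l k * Ili l i := by
        intro i k
        have hgC : ContDiff ℝ 1 (fun y => fderiv ℝ f y (Pi.single i 1)) := pf_contDiff hf i
        have hibp_v : ∀ v : Fin n → ℝ,
            (∫ u, u k * fderiv ℝ f (xt t (u, v)) (Pi.single i 1) ∂(stdGaussianPi n))
              = ∫ u, (Real.sqrt t * ∑ l, A l k * hessianMatrix n f (xt t (u, v)) l i)
                  ∂(stdGaussianPi n) := by
          intro v
          set w : Fin n → ℝ := fun m => Real.sqrt (1-t) * B.mulVec v m with hw
          set h : (Fin n → ℝ) → ℝ :=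
            fun u => fderiv ℝ f (fun m => Real.sqrt t * A.mulVec u m + w m) (Pi.single i 1)
            with hh
          have hCD : ContDiff ℝ 1 h := hgC.comp (contDiff_affine_mulVec A (Real.sqrt t) w)
          have hder : ∀ u : Fin n → ℝ, fderiv ℝ h u (Pi.single k 1)
              = Real.sqrt t * ∑ l, A l k * hessianMatrix n f (xt t (u, v)) l i := by
            intro u
            rw [hh, fderiv_comp_affine _ hgC A (Real.sqrt t) w u k]
            rfl
          set Dv : ℝ := (1 + SA) * (Real.exp lam * Real.exp ((lam*SB) * ∑ j, |v j|)) with hDv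
          have hX0 : (0:ℝ) ≤ Real.exp lam * Real.exp ((lam*SB) * ∑ j, |v j|) := by positivity
          have hDv0 : 0 ≤ Dv := by positivity
          have hΦv : ∀ u : Fin n → ℝ, Φ (xt t (u, v)) ≤
              (Real.exp lam * Real.exp ((lam*SB) * ∑ j, |v j|))
                * Real.exp ((lam*SA) * ∑ j, |u j|) := by
            intro u
            calc Φ (xt t (u,v)) ≤ Real.exp lam * (Real.exp ((lam*SA) * ∑ j, |u j|)
                  * Real.exp ((lam*SB) * ∑ j, |v j|)) := hΦxt t (u, v) hst1 hs1t1
              _ = (Real.exp lam * Real.exp ((lam*SB) * ∑ j, |v j|))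
                  * Real.exp ((lam*SA) * ∑ j, |u j|) := by ring
          have hbv : ∀ u, |h u| ≤ Dv * Real.exp ((lam*SA) * ∑ j, |u j|) := by
            intro u
            have h1 : |h u| ≤ Φ (xt t (u,v)) := hb1 _ i
            refine h1.trans ((hΦv u).trans ?_)
            exact mul_le_mul_of_nonneg_right
              (le_mul_of_one_le_left hX0 (by linarith)) (Real.exp_nonneg _)
          have hbv' : ∀ u, |fderiv ℝ h u (Pi.single k 1)|
              ≤ Dv * Real.exp ((lam*SA) * ∑ j, |u j|) := by
            intro u
            rw [hder u]
            have h2 : |∑ l, A l k * hessianMatrix n f (xt t (u,v)) l i|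
                ≤ SA * Φ (xt t (u,v)) := by
              calc |∑ l, A l k * hessianMatrix n f (xt t (u,v)) l i|
                  ≤ ∑ l, |A l k| * |hessianMatrix n f (xt t (u,v)) l i| := by
                    refine (Finset.abs_sum_le_sum_abs _ _).trans ?_
                    refine Finset.sum_le_sum fun l _ => ?_
                    rw [abs_mul]
                _ ≤ ∑ l, |A l k| * Φ (xt t (u,v)) :=
                    Finset.sum_le_sum fun l _ =>
                      mul_le_mul_of_nonneg_left (hb2 _ l i) (abs_nonneg _)
                _ = (∑ l, |A l k|) * Φ (xt t (u,v)) := by rw [Finset.sum_mul]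
                _ ≤ SA * Φ (xt t (u,v)) :=
                    mul_le_mul_of_nonneg_right (col_abs_le A k) (hΦpos _).le
            calc |Real.sqrt t * ∑ l, A l k * hessianMatrix n f (xt t (u,v)) l i|
                = Real.sqrt t * |∑ l, A l k * hessianMatrix n f (xt t (u,v)) l i| := by
                  rw [abs_mul, abs_of_nonneg hsqt0.le]
              _ ≤ 1 * (SA * Φ (xt t (u,v))) :=
                  mul_le_mul hst1 h2 (abs_nonneg _) zero_le_one
              _ = SA * Φ (xt t (u,v)) := one_mul _
              _ ≤ SA * ((Real.exp lam * Real.exp ((lam*SB) * ∑ j, |v j|))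
                  * Real.exp ((lam*SA) * ∑ j, |u j|)) :=
                  mul_le_mul_of_nonneg_left (hΦv u) hSA0
              _ ≤ Dv * Real.exp ((lam*SA) * ∑ j, |u j|) := by
                  rw [hDv]
                  have h3 : SA ≤ 1 + SA := by linarith
                  calc SA * ((Real.exp lam * Real.exp ((lam*SB) * ∑ j, |v j|))
                      * Real.exp ((lam*SA) * ∑ j, |u j|))
                      = (SA * (Real.exp lam * Real.exp ((lam*SB) * ∑ j, |v j|)))
                        * Real.exp ((lam*SA) * ∑ j, |u j|) := by ring
                    _ ≤ ((1 + SA) * (Real.exp lam * Real.exp ((lam*SB) * ∑ j, |v j|)))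
                        * Real.exp ((lam*SA) * ∑ j, |u j|) :=
                        mul_le_mul_of_nonneg_right
                          (mul_le_mul_of_nonneg_right h3 hX0) (Real.exp_nonneg _)
          have hibp := ibp_pi h hCD k (lam*SA) Dv (mul_nonneg hlam hSA0) hDv0 hbv hbv'
          calc (∫ u, u k * fderiv ℝ f (xt t (u, v)) (Pi.single i 1) ∂(stdGaussianPi n))
              = ∫ u, fderiv ℝ h u (Pi.single k 1) ∂(stdGaussianPi n) := hibp
            _ = ∫ u, (Real.sqrt t * ∑ l, A l k * hessianMatrix n f (xt t (u, v)) l i)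
                  ∂(stdGaussianPi n) := integral_congr_ae (ae_of_all _ fun u => hder u)
        have hint_rhs : Integrable (fun p : (Fin n → ℝ) × (Fin n → ℝ) =>
            Real.sqrt t * ∑ l, A l k * hessianMatrix n f (xt t p) l i) γ2 :=
          (integrable_finset_sum _ fun l _ =>
            (hH_int t ht0.le ht1.le l i).const_mul _).const_mul _
        calc (∫ p, p.1 k * fderiv ℝ f (xt t p) (Pi.single i 1) ∂γ2)
            = ∫ v, ∫ u, u k * fderiv ℝ f (xt t (u, v)) (Pi.single i 1)
                ∂(stdGaussianPi n) ∂(stdGaussianPi n) := integral_prod_symm _ (hu_int k i)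
          _ = ∫ v, ∫ u, (Real.sqrt t * ∑ l, A l k * hessianMatrix n f (xt t (u, v)) l i)
                ∂(stdGaussianPi n) ∂(stdGaussianPi n) :=
              integral_congr_ae (ae_of_all _ fun v => hibp_v v)
          _ = ∫ p, (Real.sqrt t * ∑ l, A l k * hessianMatrix n f (xt t p) l i) ∂γ2 :=
              (integral_prod_symm _ hint_rhs).symm
          _ = Real.sqrt t * ∑ l, A l k * Ili l i := by
              rw [integral_const_mul]
              congr 1
              rw [integral_finset_sum _ (fun l _ =>
                (hH_int t ht0.le ht1.le l i).const_mul _)]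
              exact Finset.sum_congr rfl fun l _ => integral_const_mul _ _
      have hIBP_B : ∀ i k, (∫ p, p.2 k * fderiv ℝ f (xt t p) (Pi.single i 1) ∂γ2)
          = Real.sqrt (1-t) * ∑ l, B l k * Ili l i := by
        intro i k
        have hgC : ContDiff ℝ 1 (fun y => fderiv ℝ f y (Pi.single i 1)) := pf_contDiff hf i
        have hibp_u : ∀ u : Fin n → ℝ,
            (∫ v, v k * fderiv ℝ f (xt t (u, v)) (Pi.single i 1) ∂(stdGaussianPi n))
              = ∫ v, (Real.sqrt (1-t) * ∑ l, B l k * hessianMatrix n f (xt t (u, v)) l i)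
                  ∂(stdGaussianPi n) := by
          intro u
          set w : Fin n → ℝ := fun m => Real.sqrt t * A.mulVec u m with hw
          set h : (Fin n → ℝ) → ℝ :=
            fun v => fderiv ℝ f (fun m => w m + Real.sqrt (1-t) * B.mulVec v m) (Pi.single i 1)
            with hh
          have hCD : ContDiff ℝ 1 h := hgC.comp (contDiff_affine_mulVec' B (Real.sqrt (1-t)) w)
          have hder : ∀ v : Fin n → ℝ, fderiv ℝ h v (Pi.single k 1)
              = Real.sqrt (1-t) * ∑ l, B l k * hessianMatrix n f (xt t (u, v)) l i := by
            intro v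
            rw [hh, fderiv_comp_affine' _ hgC B (Real.sqrt (1-t)) w v k]
            rfl
          set Dv : ℝ := (1 + SB) * (Real.exp lam * Real.exp ((lam*SA) * ∑ j, |u j|)) with hDv
          have hX0 : (0:ℝ) ≤ Real.exp lam * Real.exp ((lam*SA) * ∑ j, |u j|) := by positivity
          have hDv0 : 0 ≤ Dv := by positivity
          have hΦv : ∀ v : Fin n → ℝ, Φ (xt t (u, v)) ≤
              (Real.exp lam * Real.exp ((lam*SA) * ∑ j, |u j|))
                * Real.exp ((lam*SB) * ∑ j, |v j|) := by
            intro v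
            calc Φ (xt t (u,v)) ≤ Real.exp lam * (Real.exp ((lam*SA) * ∑ j, |u j|)
                  * Real.exp ((lam*SB) * ∑ j, |v j|)) := hΦxt t (u, v) hst1 hs1t1
              _ = (Real.exp lam * Real.exp ((lam*SA) * ∑ j, |u j|))
                  * Real.exp ((lam*SB) * ∑ j, |v j|) := by ring
          have hbv : ∀ v, |h v| ≤ Dv * Real.exp ((lam*SB) * ∑ j, |v j|) := by
            intro v
            have h1 : |h v| ≤ Φ (xt t (u,v)) := hb1 _ i
            refine h1.trans ((hΦv v).trans ?_)
            exact mul_le_mul_of_nonneg_right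
              (le_mul_of_one_le_left hX0 (by linarith)) (Real.exp_nonneg _)
          have hbv' : ∀ v, |fderiv ℝ h v (Pi.single k 1)|
              ≤ Dv * Real.exp ((lam*SB) * ∑ j, |v j|) := by
            intro v
            rw [hder v]
            have h2 : |∑ l, B l k * hessianMatrix n f (xt t (u,v)) l i|
                ≤ SB * Φ (xt t (u,v)) := by
              calc |∑ l, B l k * hessianMatrix n f (xt t (u,v)) l i|
                  ≤ ∑ l, |B l k| * |hessianMatrix n f (xt t (u,v)) l i| := by
                    refine (Finset.abs_sum_le_sum_abs _ _).trans ?_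
                    refine Finset.sum_le_sum fun l _ => ?_
                    rw [abs_mul]
                _ ≤ ∑ l, |B l k| * Φ (xt t (u,v)) :=
                    Finset.sum_le_sum fun l _ =>
                      mul_le_mul_of_nonneg_left (hb2 _ l i) (abs_nonneg _)
                _ = (∑ l, |B l k|) * Φ (xt t (u,v)) := by rw [Finset.sum_mul]
                _ ≤ SB * Φ (xt t (u,v)) :=
                    mul_le_mul_of_nonneg_right (col_abs_le B k) (hΦpos _).le
            calc |Real.sqrt (1-t) * ∑ l, B l k * hessianMatrix n f (xt t (u,v)) l i|
                = Real.sqrt (1-t) * |∑ l, B l k * hessianMatrix n f (xt t (u,v)) l i| := by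
                  rw [abs_mul, abs_of_nonneg hsq1t0.le]
              _ ≤ 1 * (SB * Φ (xt t (u,v))) :=
                  mul_le_mul hs1t1 h2 (abs_nonneg _) zero_le_one
              _ = SB * Φ (xt t (u,v)) := one_mul _
              _ ≤ SB * ((Real.exp lam * Real.exp ((lam*SA) * ∑ j, |u j|))
                  * Real.exp ((lam*SB) * ∑ j, |v j|)) :=
                  mul_le_mul_of_nonneg_left (hΦv v) hSB0
              _ ≤ Dv * Real.exp ((lam*SB) * ∑ j, |v j|) := by
                  rw [hDv]
                  have h3 : SB ≤ 1 + SB := by linarith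
                  calc SB * ((Real.exp lam * Real.exp ((lam*SA) * ∑ j, |u j|))
                      * Real.exp ((lam*SB) * ∑ j, |v j|))
                      = (SB * (Real.exp lam * Real.exp ((lam*SA) * ∑ j, |u j|)))
                        * Real.exp ((lam*SB) * ∑ j, |v j|) := by ring
                    _ ≤ ((1 + SB) * (Real.exp lam * Real.exp ((lam*SA) * ∑ j, |u j|)))
                        * Real.exp ((lam*SB) * ∑ j, |v j|) :=
                        mul_le_mul_of_nonneg_right
                          (mul_le_mul_of_nonneg_right h3 hX0) (Real.exp_nonneg _)
          have hibp := ibp_pi h hCD k (lam*SB) Dv (mul_nonneg hlam hSB0) hDv0 hbv hbv'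
          calc (∫ v, v k * fderiv ℝ f (xt t (u, v)) (Pi.single i 1) ∂(stdGaussianPi n))
              = ∫ v, fderiv ℝ h v (Pi.single k 1) ∂(stdGaussianPi n) := hibp
            _ = ∫ v, (Real.sqrt (1-t) * ∑ l, B l k * hessianMatrix n f (xt t (u, v)) l i)
                  ∂(stdGaussianPi n) := integral_congr_ae (ae_of_all _ fun v => hder v)
        have hint_rhs : Integrable (fun p : (Fin n → ℝ) × (Fin n → ℝ) =>
            Real.sqrt (1-t) * ∑ l, B l k * hessianMatrix n f (xt t p) l i) γ2 :=
          (integrable_finset_sum _ fun l _ =>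
            (hH_int t ht0.le ht1.le l i).const_mul _).const_mul _
        calc (∫ p, p.2 k * fderiv ℝ f (xt t p) (Pi.single i 1) ∂γ2)
            = ∫ u, ∫ v, v k * fderiv ℝ f (xt t (u, v)) (Pi.single i 1)
                ∂(stdGaussianPi n) ∂(stdGaussianPi n) := integral_prod _ (hv_int k i)
          _ = ∫ u, ∫ v, (Real.sqrt (1-t) * ∑ l, B l k * hessianMatrix n f (xt t (u, v)) l i)
                ∂(stdGaussianPi n) ∂(stdGaussianPi n) :=
              integral_congr_ae (ae_of_all _ fun u => hibp_u u)
          _ = ∫ p, (Real.sqrt (1-t) * ∑ l, B l k * hessianMatrix n f (xt t p) l i) ∂γ2 :=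
              (integral_prod _ hint_rhs).symm
          _ = Real.sqrt (1-t) * ∑ l, B l k * Ili l i := by
              rw [integral_const_mul]
              congr 1
              rw [integral_finset_sum _ (fun l _ =>
                (hH_int t ht0.le ht1.le l i).const_mul _)]
              exact Finset.sum_congr rfl fun l _ => integral_const_mul _ _
      -- split the integrand
      have hsplit : ∀ p : (Fin n → ℝ) × (Fin n → ℝ), fderiv ℝ f (xt t p) (dxt t p)
          = (1 / (2 * Real.sqrt t)) *
              (∑ i, A.mulVec p.1 i * fderiv ℝ f (xt t p) (Pi.single i 1))
            + (1 / (2 * Real.sqrt (1-t)) * (-1)) *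
              (∑ i, B.mulVec p.2 i * fderiv ℝ f (xt t p) (Pi.single i 1)) := by
        intro p
        calc fderiv ℝ f (xt t p) (dxt t p)
            = ∑ i, dxt t p i * fderiv ℝ f (xt t p) (Pi.single i 1) := clm_apply_eq_sum _ _
          _ = ∑ i, ((1 / (2 * Real.sqrt t)) *
                (A.mulVec p.1 i * fderiv ℝ f (xt t p) (Pi.single i 1))
              + (1 / (2 * Real.sqrt (1-t)) * (-1)) *
                (B.mulVec p.2 i * fderiv ℝ f (xt t p) (Pi.single i 1))) := by
              refine Finset.sum_congr rfl fun i _ => ?_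
              show (1 / (2 * Real.sqrt t) * A.mulVec p.1 i
                + 1 / (2 * Real.sqrt (1 - t)) * (-1) * B.mulVec p.2 i) *
                  fderiv ℝ f (xt t p) (Pi.single i 1) = _
              ring
          _ = _ := by
              rw [Finset.sum_add_distrib, ← Finset.mul_sum, ← Finset.mul_sum]
      -- computation of the two sums
      have hCXe : ∀ i l, CX i l = ∑ k, A i k * A l k := by
        intro i l
        rw [hCA]
        simp [Matrix.mul_apply, Matrix.transpose_apply]
      have hCYe : ∀ i l, CY i l = ∑ k, B i k * B l k := by
        intro i l
        rw [hCB]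
        simp [Matrix.mul_apply, Matrix.transpose_apply]
      have hQA : (∫ p, ∑ i, A.mulVec p.1 i * fderiv ℝ f (xt t p) (Pi.single i 1) ∂γ2)
          = Real.sqrt t * ∑ i, ∑ l, CX i l * Ili l i := by
        rw [integral_finset_sum _ (fun i _ => hterm_intA i)]
        have h1 : ∀ i, (∫ p, A.mulVec p.1 i * fderiv ℝ f (xt t p) (Pi.single i 1) ∂γ2)
            = ∑ k, A i k * (Real.sqrt t * ∑ l, A l k * Ili l i) := by
          intro i
          have h2 : ∀ p : (Fin n → ℝ) × (Fin n → ℝ),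
              A.mulVec p.1 i * fderiv ℝ f (xt t p) (Pi.single i 1)
              = ∑ k, A i k * (p.1 k * fderiv ℝ f (xt t p) (Pi.single i 1)) := by
            intro p
            have h3 : A.mulVec p.1 i = ∑ k, A i k * p.1 k := by
              simp [Matrix.mulVec, dotProduct]
            rw [h3, Finset.sum_mul]
            exact Finset.sum_congr rfl fun k _ => by ring
          rw [integral_congr_ae (ae_of_all _ h2),
            integral_finset_sum _ (fun k _ => (hu_int k i).const_mul _)]
          exact Finset.sum_congr rfl fun k _ => by
            rw [integral_const_mul, hIBP_A i k]
        rw [Finset.sum_congr rfl fun i _ => h1 i]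
        calc ∑ i, ∑ k, A i k * (Real.sqrt t * ∑ l, A l k * Ili l i)
            = ∑ i, ∑ k, ∑ l, Real.sqrt t * (A i k * A l k * Ili l i) := by
              refine Finset.sum_congr rfl fun i _ => Finset.sum_congr rfl fun k _ => ?_
              rw [Finset.mul_sum, Finset.mul_sum]
              exact Finset.sum_congr rfl fun l _ => by ring
          _ = Real.sqrt t * ∑ i, ∑ l, CX i l * Ili l i := by
              rw [Finset.mul_sum]
              refine Finset.sum_congr rfl fun i _ => ?_
              rw [Finset.sum_comm, Finset.mul_sum]
              refine Finset.sum_congr rfl fun l _ => ?_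
              rw [hCXe i l, Finset.sum_mul, Finset.mul_sum]
              all_goals exact Finset.sum_congr rfl fun k _ => by ring
      have hQB : (∫ p, ∑ i, B.mulVec p.2 i * fderiv ℝ f (xt t p) (Pi.single i 1) ∂γ2)
          = Real.sqrt (1-t) * ∑ i, ∑ l, CY i l * Ili l i := by
        rw [integral_finset_sum _ (fun i _ => hterm_intB i)]
        have h1 : ∀ i, (∫ p, B.mulVec p.2 i * fderiv ℝ f (xt t p) (Pi.single i 1) ∂γ2)
            = ∑ k, B i k * (Real.sqrt (1-t) * ∑ l, B l k * Ili l i) := by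
          intro i
          have h2 : ∀ p : (Fin n → ℝ) × (Fin n → ℝ),
              B.mulVec p.2 i * fderiv ℝ f (xt t p) (Pi.single i 1)
              = ∑ k, B i k * (p.2 k * fderiv ℝ f (xt t p) (Pi.single i 1)) := by
            intro p
            have h3 : B.mulVec p.2 i = ∑ k, B i k * p.2 k := by
              simp [Matrix.mulVec, dotProduct]
            rw [h3, Finset.sum_mul]
            exact Finset.sum_congr rfl fun k _ => by ring
          rw [integral_congr_ae (ae_of_all _ h2),
            integral_finset_sum _ (fun k _ => (hv_int k i).const_mul _)]
          exact Finset.sum_congr rfl fun k _ => by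
            rw [integral_const_mul, hIBP_B i k]
        rw [Finset.sum_congr rfl fun i _ => h1 i]
        calc ∑ i, ∑ k, B i k * (Real.sqrt (1-t) * ∑ l, B l k * Ili l i)
            = ∑ i, ∑ k, ∑ l, Real.sqrt (1-t) * (B i k * B l k * Ili l i) := by
              refine Finset.sum_congr rfl fun i _ => Finset.sum_congr rfl fun k _ => ?_
              rw [Finset.mul_sum, Finset.mul_sum]
              exact Finset.sum_congr rfl fun l _ => by ring
          _ = Real.sqrt (1-t) * ∑ i, ∑ l, CY i l * Ili l i := by
              rw [Finset.mul_sum]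
              refine Finset.sum_congr rfl fun i _ => ?_
              rw [Finset.sum_comm, Finset.mul_sum]
              refine Finset.sum_congr rfl fun l _ => ?_
              rw [hCYe i l, Finset.sum_mul, Finset.mul_sum]
              all_goals exact Finset.sum_congr rfl fun k _ => by ring
      -- expansion of G t
      have hGexp : G t = (∑ i, ∑ l, CY i l * Ili l i) - (∑ i, ∑ l, CX i l * Ili l i) := by
        have h1 : ∀ p : (Fin n → ℝ) × (Fin n → ℝ),
            Matrix.trace (D * hessianMatrix n f (xt t p))
            = ∑ i, ∑ l, D i l * hessianMatrix n f (xt t p) l i := fun p => trace_mul_eq _ _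
        calc G t = ∫ p, ∑ i, ∑ l, D i l * hessianMatrix n f (xt t p) l i ∂γ2 :=
              integral_congr_ae (ae_of_all _ h1)
          _ = ∑ i, ∑ l, D i l * Ili l i := by
              rw [integral_finset_sum _ (fun i _ => integrable_finset_sum _
                (fun l _ => ((hH_int t ht0.le ht1.le l i).const_mul (D i l))))]
              refine Finset.sum_congr rfl fun i _ => ?_
              rw [integral_finset_sum _ (fun l _ =>
                ((hH_int t ht0.le ht1.le l i).const_mul (D i l)))]
              exact Finset.sum_congr rfl fun l _ => integral_const_mul _ _
          _ = (∑ i, ∑ l, CY i l * Ili l i) - ∑ i, ∑ l, CX i l * Ili l i := by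
              rw [← Finset.sum_sub_distrib]
              refine Finset.sum_congr rfl fun i _ => ?_
              rw [← Finset.sum_sub_distrib]
              refine Finset.sum_congr rfl fun l _ => ?_
              show (CY - CX) i l * Ili l i = _
              rw [Matrix.sub_apply]
              ring
      -- put everything together
      rw [integral_congr_ae (ae_of_all _ hsplit)]
      rw [integral_add ((integrable_finset_sum _ fun i _ => hterm_intA i).const_mul _)
        ((integrable_finset_sum _ fun i _ => hterm_intB i).const_mul _),
        integral_const_mul, integral_const_mul, hQA, hQB, hGexp]
      have e1 : 1 / (2 * Real.sqrt t) * Real.sqrt t = 1/2 := by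
        field_simp
      have e2 : 1 / (2 * Real.sqrt (1-t)) * Real.sqrt (1-t) = 1/2 := by
        field_simp
      calc 1 / (2 * Real.sqrt t) * (Real.sqrt t * ∑ i, ∑ l, CX i l * Ili l i)
            + 1 / (2 * Real.sqrt (1 - t)) * (-1) *
              (Real.sqrt (1-t) * ∑ i, ∑ l, CY i l * Ili l i)
          = (1 / (2 * Real.sqrt t) * Real.sqrt t) * (∑ i, ∑ l, CX i l * Ili l i)
            - (1 / (2 * Real.sqrt (1-t)) * Real.sqrt (1-t)) *
              (∑ i, ∑ l, CY i l * Ili l i) := by ring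
        _ = -(1/2) * ((∑ i, ∑ l, CY i l * Ili l i) - ∑ i, ∑ l, CX i l * Ili l i) := by
            rw [e1, e2]
            ring
    rw [← hval]
    exact key.2
  -- FTC and conclusion
  have hint : IntervalIntegrable (fun t => -(1/2) * G t) MeasureTheory.volume 0 1 := by
    apply ContinuousOn.intervalIntegrable
    rw [Set.uIcc_of_le zero_le_one]
    exact continuousOn_const.mul hGcont
  have hFTC := intervalIntegral.integral_eq_sub_of_hasDeriv_right_of_le zero_le_one hFcont
    (fun t ht => (hderiv t ht).hasDerivWithinAt) hint
  have hhalf : ∫ t in (0:ℝ)..1, -(1/2) * G t = -(1/2) * ∫ t in (0:ℝ)..1, G t :=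
    intervalIntegral.integral_const_mul _ _
  calc (∫ y, f y ∂μY) - (∫ x, f x ∂μX) = F 0 - F 1 := by rw [hF0, hF1]
    _ = (1/2) * ∫ t in (0:ℝ)..1, G t := by
        rw [hhalf] at hFTC
        linarith
    _ = (1 / 2) * ∫ t in (0:ℝ)..1,
          ∫ p : (Fin n → ℝ) × (Fin n → ℝ), Matrix.trace (D * hessianMatrix n f
            (fun m => Real.sqrt t * p.1 m + Real.sqrt (1 - t) * p.2 m)) ∂(μX.prod μY) := by
        have heq : (∫ t in (0:ℝ)..1, G t) = ∫ t in (0:ℝ)..1,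
            ∫ p : (Fin n → ℝ) × (Fin n → ℝ), Matrix.trace (D * hessianMatrix n f
              (fun m => Real.sqrt t * p.1 m + Real.sqrt (1 - t) * p.2 m)) ∂(μX.prod μY) := by
          apply intervalIntegral.integral_congr
          intro t _
          exact (hGt t).symm
        rw [heq]
end

section
/- Let X and Y be centered Gaussian random vectors in ℝⁿ with covariance matrices C^X and C^Y. Fix positive weights w₁,…,w_n > 0 and let f(x) = log Σ_{i=1}ⁿ w_i e^{x_i}. If C^X_{ii} = C^Y_{ii} for every i, and C^X_{ij} ≥ C^Y_{ij} for every i ≠ j, then E[f(Y)] ≥ E[f(X)]. -/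
open MeasureTheory ProbabilityTheory Real
open scoped ENNReal NNReal

noncomputable section GT

variable {N : ℕ}

def gtS (w : Fin N → ℝ) (x : Fin N → ℝ) : ℝ := ∑ i, w i * Real.exp (x i)

def gtf (w : Fin N → ℝ) (x : Fin N → ℝ) : ℝ := Real.log (gtS w x)

def gtp (w : Fin N → ℝ) (i : Fin N) (x : Fin N → ℝ) : ℝ := w i * Real.exp (x i) / gtS w x

variable {w : Fin N → ℝ}

lemma gtS_pos [NeZero N] (hw : ∀ i, 0 < w i) (x : Fin N → ℝ) : 0 < gtS w x :=
  Finset.sum_pos (fun i _ => mul_pos (hw i) (Real.exp_pos _)) ⟨0, Finset.mem_univ 0⟩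

lemma gtp_pos [NeZero N] (hw : ∀ i, 0 < w i) (i : Fin N) (x : Fin N → ℝ) : 0 < gtp w i x :=
  div_pos (mul_pos (hw i) (Real.exp_pos _)) (gtS_pos hw x)

lemma gtp_le_one [NeZero N] (hw : ∀ i, 0 < w i) (i : Fin N) (x : Fin N → ℝ) :
    gtp w i x ≤ 1 := by
  rw [gtp, div_le_one (gtS_pos hw x)]
  exact Finset.single_le_sum (f := fun j => w j * Real.exp (x j))
    (fun j _ => mul_nonneg (hw j).le (Real.exp_pos _).le) (Finset.mem_univ i)

lemma abs_gtp_le_one [NeZero N] (hw : ∀ i, 0 < w i) (i : Fin N) (x : Fin N → ℝ) :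
    |gtp w i x| ≤ 1 := by
  rw [abs_of_pos (gtp_pos hw i x)]; exact gtp_le_one hw i x

lemma hasDerivAt_gtS {x : ℝ → Fin N → ℝ} {x' : Fin N → ℝ} {t : ℝ}
    (hx : ∀ j, HasDerivAt (fun s => x s j) (x' j) t) :
    HasDerivAt (fun s => gtS w (x s)) (∑ j, w j * Real.exp (x t j) * x' j) t := by
  unfold gtS
  exact HasDerivAt.fun_sum fun j _ => by
    simpa [mul_assoc] using ((hx j).exp.const_mul (w j))

lemma hasDerivAt_gtf [NeZero N] (hw : ∀ i, 0 < w i) {x : ℝ → Fin N → ℝ} {x' : Fin N → ℝ} {t : ℝ}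
    (hx : ∀ j, HasDerivAt (fun s => x s j) (x' j) t) :
    HasDerivAt (fun s => gtf w (x s)) (∑ j, gtp w j (x t) * x' j) t := by
  have h := (hasDerivAt_gtS (w := w) hx).log (gtS_pos hw (x t)).ne'
  refine h.congr_deriv ?_
  rw [Finset.sum_div]
  exact Finset.sum_congr rfl fun j _ => by rw [gtp]; ring

lemma gtp_sum_eq [NeZero N] (hw : ∀ i, 0 < w i) (x : Fin N → ℝ) (x' : Fin N → ℝ) :
    ∑ j, gtp w j x * x' j = (∑ j, w j * Real.exp (x j) * x' j) / gtS w x := by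
  rw [Finset.sum_div]
  exact Finset.sum_congr rfl fun j _ => by rw [gtp]; ring

lemma hasDerivAt_gtp [NeZero N] (hw : ∀ i, 0 < w i) (i : Fin N)
    {x : ℝ → Fin N → ℝ} {x' : Fin N → ℝ} {t : ℝ}
    (hx : ∀ j, HasDerivAt (fun s => x s j) (x' j) t) :
    HasDerivAt (fun s => gtp w i (x s))
      (gtp w i (x t) * x' i - gtp w i (x t) * ∑ j, gtp w j (x t) * x' j) t := by
  have hS := gtS_pos hw (x t)
  have hnum : HasDerivAt (fun s => w i * Real.exp (x s i)) (w i * Real.exp (x t i) * x' i) t := by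
    simpa [mul_assoc] using ((hx i).exp.const_mul (w i))
  have h := hnum.div (hasDerivAt_gtS (w := w) hx) hS.ne'
  refine h.congr_deriv ?_
  rw [gtp_sum_eq hw, gtp]
  field_simp

lemma abs_gtf_le [NeZero N] (hw : ∀ i, 0 < w i) (x : Fin N → ℝ) :
    |gtf w x| ≤ (|Real.log (∑ i, w i)| + |Real.log (w 0)|) + ∑ i, |x i| := by
  have hS := gtS_pos hw x
  have hwsum : (0:ℝ) < ∑ i, w i := Finset.sum_pos (fun i _ => hw i) ⟨0, Finset.mem_univ 0⟩
  have hub : gtf w x ≤ Real.log (∑ i, w i) + ∑ i, |x i| := by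
    rw [gtf]
    have h1 : gtS w x ≤ (∑ i, w i) * Real.exp (∑ i, |x i|) := by
      rw [Finset.sum_mul]
      refine Finset.sum_le_sum fun i _ => ?_
      refine mul_le_mul_of_nonneg_left (Real.exp_le_exp.2 ?_) (hw i).le
      exact le_trans (le_abs_self _) (Finset.single_le_sum (f := fun j => |x j|)
        (fun j _ => abs_nonneg _) (Finset.mem_univ i))
    calc Real.log (gtS w x) ≤ Real.log ((∑ i, w i) * Real.exp (∑ i, |x i|)) :=
          Real.log_le_log hS h1
      _ = Real.log (∑ i, w i) + ∑ i, |x i| := by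
          rw [Real.log_mul hwsum.ne' (Real.exp_ne_zero _), Real.log_exp]
  have hlb : Real.log (w 0) - ∑ i, |x i| ≤ gtf w x := by
    rw [gtf]
    have h1 : w 0 * Real.exp (-∑ i, |x i|) ≤ gtS w x := by
      refine le_trans ?_ (Finset.single_le_sum (f := fun j => w j * Real.exp (x j))
        (fun j _ => mul_nonneg (hw j).le (Real.exp_pos _).le) (Finset.mem_univ 0))
      refine mul_le_mul_of_nonneg_left (Real.exp_le_exp.2 ?_) (hw 0).le
      have h3 := Finset.single_le_sum (f := fun j => |x j|) (fun j _ => abs_nonneg _)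
        (Finset.mem_univ 0)
      have h2 := neg_abs_le (x 0)
      linarith
    calc Real.log (w 0) - ∑ i, |x i|
        = Real.log (w 0 * Real.exp (-∑ i, |x i|)) := by
          rw [Real.log_mul (hw 0).ne' (Real.exp_ne_zero _), Real.log_exp]; ring
      _ ≤ Real.log (gtS w x) := Real.log_le_log (mul_pos (hw 0) (Real.exp_pos _)) h1
  have ha : -|Real.log (w 0)| ≤ Real.log (w 0) := neg_abs_le _
  have hb : Real.log (∑ i, w i) ≤ |Real.log (∑ i, w i)| := le_abs_self _
  have hc : (0:ℝ) ≤ |Real.log (∑ i, w i)| := abs_nonneg _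
  have hd : (0:ℝ) ≤ |Real.log (w 0)| := abs_nonneg _
  rw [abs_le]
  constructor <;> linarith

lemma continuous_gtS : Continuous (gtS w) := by
  unfold gtS; continuity

lemma continuous_gtf [NeZero N] (hw : ∀ i, 0 < w i) : Continuous (gtf w) :=
  continuous_gtS.log fun x => (gtS_pos hw x).ne'

lemma continuous_gtp [NeZero N] (hw : ∀ i, 0 < w i) (i : Fin N) :
    Continuous (gtp w i) := by
  unfold gtp
  exact Continuous.div (by continuity) continuous_gtS fun x => (gtS_pos hw x).ne'

end GT
open scoped ENNReal NNReal

noncomputable section G1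

/-- the standard gaussian measure -/
abbrev γ1 : Measure ℝ := gaussianReal 0 1

lemma gpdf_eq : gaussianPDFReal 0 1 = fun x => (√(2 * π))⁻¹ * Real.exp (-x ^ 2 / 2) := by
  rw [gaussianPDFReal_def]
  funext x
  norm_num

lemma gpdf_nonneg (x : ℝ) : 0 ≤ gaussianPDFReal 0 1 x := gaussianPDFReal_nonneg 0 1 x

lemma γ1_eq : γ1 = volume.withDensity fun x => ENNReal.ofReal (gaussianPDFReal 0 1 x) :=
  gaussianReal_of_var_ne_zero 0 one_ne_zero

/-- conversion of integrals to Lebesgue integrals with density -/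
lemma integral_γ1 (h : ℝ → ℝ) :
    ∫ x, h x ∂γ1 = ∫ x, gaussianPDFReal 0 1 x * h x := by
  rw [γ1_eq]
  have : (fun x => ENNReal.ofReal (gaussianPDFReal 0 1 x))
      = fun x => ((gaussianPDFReal 0 1 x).toNNReal : ℝ≥0∞) := by
    funext x; rfl
  rw [this, integral_withDensity_eq_integral_smul
    (measurable_gaussianPDFReal 0 1).real_toNNReal h]
  congr 1
  funext x
  simp [NNReal.smul_def, Real.coe_toNNReal _ (gpdf_nonneg x)]

lemma integrable_γ1_iff {h : ℝ → ℝ} :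
    Integrable h γ1 ↔ Integrable (fun x => h x * gaussianPDFReal 0 1 x) := by
  rw [γ1_eq, integrable_withDensity_iff ((measurable_gaussianPDFReal 0 1).ennreal_ofReal) (ae_of_all _ fun x => ENNReal.ofReal_lt_top)]
  constructor <;> intro h' <;> refine h'.congr (ae_of_all _ fun x => ?_) <;>
    simp [ENNReal.toReal_ofReal (gpdf_nonneg x)]

lemma integrable_pdf_γ1 : Integrable (gaussianPDFReal 0 1) := integrable_gaussianPDFReal 0 1

lemma integrable_abs_mul_pdf : Integrable (fun x => |x| * gaussianPDFReal 0 1 x) := by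
  rw [gpdf_eq]
  have h := (integrable_mul_exp_neg_mul_sq (b := 1/2) (by norm_num)).abs.const_mul ((√(2 * π))⁻¹)
  refine h.congr ?_
  filter_upwards with x
  rw [abs_mul, abs_of_nonneg (Real.exp_pos _).le]
  ring_nf

lemma integrable_abs_γ1 : Integrable (fun x => |x|) γ1 := by
  rw [integrable_γ1_iff]; exact integrable_abs_mul_pdf

lemma integrable_id_γ1 : Integrable (fun x : ℝ => x) γ1 :=
  integrable_abs_γ1.mono' measurable_id.aestronglyMeasurable (by filter_upwards with x; simp)

lemma hasDerivAt_gpdf (x : ℝ) :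
    HasDerivAt (gaussianPDFReal 0 1) (-x * gaussianPDFReal 0 1 x) x := by
  rw [gpdf_eq]
  have h1 : HasDerivAt (fun x : ℝ => -x ^ 2 / 2) (-x) x := by
    have := ((hasDerivAt_pow 2 x).neg).div_const 2
    simpa using this.congr_deriv (by ring)
  have h2 := (h1.exp).const_mul ((√(2 * π))⁻¹)
  refine h2.congr_deriv ?_
  ring

/-- Gaussian integration by parts. -/
lemma gaussian_ibp {q q' : ℝ → ℝ} (hd : ∀ t, HasDerivAt q (q' t) t)
    (hq' : Continuous q') {M M' : ℝ} (hM : ∀ t, |q t| ≤ M) (hM' : ∀ t, |q' t| ≤ M') :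
    ∫ t, t * q t ∂γ1 = ∫ t, q' t ∂γ1 := by
  have hqc : Continuous q := by
    rw [continuous_iff_continuousAt]; exact fun t => (hd t).continuousAt
  have hpdfc : Continuous (gaussianPDFReal 0 1) := by
    rw [gpdf_eq]; continuity
  -- integrabilities
  have hint1 : Integrable (fun x => q x * (-x * gaussianPDFReal 0 1 x)) := by
    refine (integrable_abs_mul_pdf.const_mul M).mono' (hqc.mul ((continuous_id.neg).mul hpdfc)).aestronglyMeasurable ?_
    filter_upwards with x
    rw [norm_eq_abs, abs_mul, abs_mul, abs_neg]
    calc |q x| * (|x| * |gaussianPDFReal 0 1 x|)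
        ≤ M * (|x| * |gaussianPDFReal 0 1 x|) := by
          refine mul_le_mul_of_nonneg_right (hM x) (by positivity)
      _ = M * (|x| * gaussianPDFReal 0 1 x) := by rw [abs_of_nonneg (gpdf_nonneg x)]
  have hint2 : Integrable (fun x => q' x * gaussianPDFReal 0 1 x) := by
    refine (integrable_pdf_γ1.const_mul M').mono' (hq'.mul hpdfc).aestronglyMeasurable ?_
    filter_upwards with x
    rw [norm_eq_abs, abs_mul, abs_of_nonneg (gpdf_nonneg x)]
    exact mul_le_mul_of_nonneg_right (hM' x) (gpdf_nonneg x)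
  have hint3 : Integrable (fun x => q x * gaussianPDFReal 0 1 x) := by
    refine (integrable_pdf_γ1.const_mul M).mono' (hqc.mul hpdfc).aestronglyMeasurable ?_
    filter_upwards with x
    rw [norm_eq_abs, abs_mul, abs_of_nonneg (gpdf_nonneg x)]
    exact mul_le_mul_of_nonneg_right (hM x) (gpdf_nonneg x)
  have key := integral_mul_deriv_eq_deriv_mul_of_integrable
    (u := q) (u' := q') (v := gaussianPDFReal 0 1)
    (v' := fun x => -x * gaussianPDFReal 0 1 x)
    (fun t _ => hd t) (fun t _ => hasDerivAt_gpdf t) hint1 hint2 hint3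
  rw [integral_γ1, integral_γ1]
  have l1 : ∫ x, gaussianPDFReal 0 1 x * (x * q x) = - ∫ x, q x * (-x * gaussianPDFReal 0 1 x) := by
    rw [← integral_neg]
    congr 1; funext x; ring
  rw [l1, key, neg_neg]
  congr 1; funext x; ring
end G1


noncomputable section G2

/-- product gaussians -/
abbrev γPi (m : ℕ) : Measure (Fin m → ℝ) := Measure.pi fun _ => γ1

/-- integrable of fst-composition for probability measures -/
lemma integrable_comp_fst {α β : Type*} [MeasurableSpace α] [MeasurableSpace β]
    {μ : Measure α} {ν : Measure β} [SigmaFinite μ] [IsProbabilityMeasure ν] {f : α → ℝ}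
    (hm : AEStronglyMeasurable f μ) (h : Integrable f μ) :
    Integrable (fun z : α × β => f z.1) (μ.prod ν) := by
  have hmap : Measure.map Prod.fst (μ.prod ν) = μ := by
    rw [Measure.map_fst_prod]; simp
  have := (integrable_map_measure (f := Prod.fst) (g := f) (by rwa [hmap])
    measurable_fst.aemeasurable).mp (by rwa [hmap])
  exact this

lemma integrable_comp_snd {α β : Type*} [MeasurableSpace α] [MeasurableSpace β]
    {μ : Measure α} {ν : Measure β} [IsProbabilityMeasure μ] [SigmaFinite ν] {f : β → ℝ}
    (hm : AEStronglyMeasurable f ν) (h : Integrable f ν) :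
    Integrable (fun z : α × β => f z.2) (μ.prod ν) := by
  have hmap : Measure.map Prod.snd (μ.prod ν) = ν := by
    rw [Measure.map_snd_prod]; simp
  have := (integrable_map_measure (f := Prod.snd) (g := f) (by rwa [hmap])
    measurable_snd.aemeasurable).mp (by rwa [hmap])
  exact this

/-- bounded continuous functions are integrable w.r.t. finite measures -/
lemma integrable_of_bounded {α : Type*} [MeasurableSpace α] [TopologicalSpace α]
    [OpensMeasurableSpace α] [SecondCountableTopology α] [TopologicalSpace.PseudoMetrizableSpace α]
    {μ : Measure α} [IsFiniteMeasure μ] {f : α → ℝ} (hf : Continuous f)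
    {M : ℝ} (hM : ∀ x, |f x| ≤ M) : Integrable f μ :=
  (integrable_const M).mono' hf.aestronglyMeasurable (ae_of_all _ hM)

lemma integral_insertNth {m : ℕ} (k : Fin (m + 1)) (F : (Fin (m + 1) → ℝ) → ℝ) :
    ∫ g, F g ∂γPi (m + 1)
      = ∫ z : ℝ × (Fin m → ℝ), F (k.insertNth z.1 z.2) ∂(γ1.prod (γPi m)) := by
  have mp := (measurePreserving_piFinSuccAbove (fun _ : Fin (m+1) => γ1) k).symm
    (MeasurableEquiv.piFinSuccAbove (fun _ => ℝ) k)
  rw [← mp.integral_comp (MeasurableEquiv.piFinSuccAbove (fun _ => ℝ) k).symm.measurableEmbedding F]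
  refine integral_congr_ae (ae_of_all _ fun z => ?_)
  simp [MeasurableEquiv.piFinSuccAbove_symm_apply, Fin.insertNthEquiv]

lemma integrable_insertNth_iff {m : ℕ} (k : Fin (m + 1)) (F : (Fin (m + 1) → ℝ) → ℝ) :
    Integrable F (γPi (m + 1))
      ↔ Integrable (fun z : ℝ × (Fin m → ℝ) => F (k.insertNth z.1 z.2)) (γ1.prod (γPi m)) := by
  have mp := (measurePreserving_piFinSuccAbove (fun _ : Fin (m+1) => γ1) k).symm
    (MeasurableEquiv.piFinSuccAbove (fun _ => ℝ) k)
  rw [← mp.integrable_comp_emb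
    (MeasurableEquiv.piFinSuccAbove (fun _ => ℝ) k).symm.measurableEmbedding (g := F)]
  constructor <;> intro h <;> refine h.congr (ae_of_all _ fun z => ?_) <;>
    simp [Function.comp, MeasurableEquiv.piFinSuccAbove_symm_apply, Fin.insertNthEquiv]

lemma continuous_insertNth {m : ℕ} (k : Fin (m + 1)) :
    Continuous (fun z : ℝ × (Fin m → ℝ) => (k.insertNth z.1 z.2 : Fin (m+1) → ℝ)) :=
  Continuous.finInsertNth k continuous_fst
    continuous_snd

lemma continuous_insertNth' {m : ℕ} (k : Fin (m + 1)) (y : Fin m → ℝ) :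
    Continuous (fun t : ℝ => (k.insertNth t y : Fin (m+1) → ℝ)) :=
  Continuous.finInsertNth k continuous_id continuous_const

lemma integrable_abs_eval {m : ℕ} (k : Fin m) :
    Integrable (fun g : Fin m → ℝ => |g k|) (γPi m) := by
  rcases m with - | m'
  · exact k.elim0
  rw [integrable_insertNth_iff k]
  simp only [Fin.insertNth_apply_same]
  exact integrable_comp_fst (continuous_abs.aestronglyMeasurable) integrable_abs_γ1

/-- Multidimensional Gaussian integration by parts -/
lemma pi_ibp {m : ℕ} (k : Fin (m + 1)) (G G' : (Fin (m + 1) → ℝ) → ℝ)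
    (hG : Continuous G) (hG' : Continuous G')
    {M M' : ℝ} (hM : ∀ g, |G g| ≤ M) (hM' : ∀ g, |G' g| ≤ M')
    (hd : ∀ (y : Fin m → ℝ) (t : ℝ),
      HasDerivAt (fun s => G (k.insertNth s y)) (G' (k.insertNth t y)) t) :
    ∫ g, g k * G g ∂γPi (m + 1) = ∫ g, G' g ∂γPi (m + 1) := by
  rw [integral_insertNth k (fun g => g k * G g), integral_insertNth k G']
  simp only [Fin.insertNth_apply_same]
  have hint1 : Integrable (fun z : ℝ × (Fin m → ℝ) => z.1 * G (k.insertNth z.1 z.2))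
      (γ1.prod (γPi m)) := by
    have hbnd : Integrable (fun z : ℝ × (Fin m → ℝ) => M * |z.1|) (γ1.prod (γPi m)) :=
      (integrable_comp_fst continuous_abs.aestronglyMeasurable integrable_abs_γ1).const_mul M
    refine hbnd.mono' ((continuous_fst.mul (hG.comp (continuous_insertNth k))).aestronglyMeasurable)
      (ae_of_all _ fun z => ?_)
    rw [norm_eq_abs, abs_mul, mul_comm]
    exact mul_le_mul_of_nonneg_right (hM _) (abs_nonneg _)
  have hint2 : Integrable (fun z : ℝ × (Fin m → ℝ) => G' (k.insertNth z.1 z.2))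
      (γ1.prod (γPi m)) :=
    integrable_of_bounded (hG'.comp (continuous_insertNth k)) (fun z => hM' _)
  rw [integral_prod_symm _ hint1, integral_prod_symm _ hint2]
  congr 1
  funext y
  exact gaussian_ibp (fun t => hd y t)
    (hG'.comp (continuous_insertNth' k y))
    (fun t => hM _) (fun t => hM' _)

end G2

noncomputable section G3
open Matrix

variable {N : ℕ}

lemma continuous_mulVecF (M : Matrix (Fin N) (Fin N) ℝ) :
    Continuous (fun g : Fin N → ℝ => M.mulVec g) := by
  refine continuous_pi fun i => ?_
  simp only [Matrix.mulVec, dotProduct]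
  exact continuous_finset_sum _ fun k _ => continuous_const.mul (continuous_apply k)

lemma continuous_mulVecF' (M : Matrix (Fin N) (Fin N) ℝ) (i : Fin N) :
    Continuous (fun g : Fin N → ℝ => M.mulVec g i) :=
  (continuous_apply i).comp (continuous_mulVecF M)

lemma integrable_eval {m : ℕ} (k : Fin m) :
    Integrable (fun g : Fin m → ℝ => g k) (γPi m) :=
  (integrable_abs_eval k).mono' (continuous_apply k).aestronglyMeasurable
    (ae_of_all _ fun g => by simp)

lemma integrable_mulVec (M : Matrix (Fin N) (Fin N) ℝ) (i : Fin N) :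
    Integrable (fun g : Fin N → ℝ => M.mulVec g i) (γPi N) := by
  simp only [Matrix.mulVec, dotProduct]
  exact integrable_finset_sum _ fun k _ => (integrable_eval k).const_mul (M i k)

lemma integrable_abs_mulVec (M : Matrix (Fin N) (Fin N) ℝ) (i : Fin N) :
    Integrable (fun g : Fin N → ℝ => |M.mulVec g i|) (γPi N) :=
  (integrable_mulVec M i).abs

/-- derivative of the `l`-th coordinate of `insertNth k · y` -/
lemma hasDerivAt_insertNth_coord {m : ℕ} (k : Fin (m+1)) (l : Fin (m+1)) (y : Fin m → ℝ)
    (t : ℝ) :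
    HasDerivAt (fun s : ℝ => (k.insertNth s y : Fin (m+1) → ℝ) l)
      (if l = k then 1 else 0) t := by
  refine Fin.succAboveCases k ?_ (fun j => ?_) l
  · simp only [Fin.insertNth_apply_same, if_pos rfl]
    exact hasDerivAt_id t
  · have hne : k.succAbove j ≠ k := Fin.succAbove_ne k j
    simp only [Fin.insertNth_apply_succAbove, if_neg hne]
    exact hasDerivAt_const t _

lemma hasDerivAt_mulVec_insertNth {m : ℕ} (M : Matrix (Fin (m+1)) (Fin (m+1)) ℝ)
    (k : Fin (m+1)) (j : Fin (m+1)) (y : Fin m → ℝ) (t : ℝ) :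
    HasDerivAt (fun s : ℝ => M.mulVec (k.insertNth s y) j) (M j k) t := by
  simp only [Matrix.mulVec, dotProduct]
  have h := HasDerivAt.fun_sum
    (A := fun l (s : ℝ) => M j l * (k.insertNth s y : Fin (m+1) → ℝ) l)
    (A' := fun l => M j l * (if l = k then 1 else 0))
    (u := Finset.univ)
    (fun l _ => ((hasDerivAt_insertNth_coord k l y t).const_mul (M j l)))
  refine h.congr_deriv ?_
  simp only [mul_ite, mul_one, mul_zero]
  rw [Finset.sum_ite_eq' Finset.univ k (fun l => M j l)]
  simp

end G3

noncomputable section G4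
open Matrix

variable {m : ℕ}

/-- the interpolation path -/
def Zmap (A B : Matrix (Fin (m+1)) (Fin (m+1)) ℝ) (θ : ℝ)
    (ω : (Fin (m+1) → ℝ) × (Fin (m+1) → ℝ)) : Fin (m+1) → ℝ :=
  fun i => Real.sin θ * A.mulVec ω.1 i + Real.cos θ * B.mulVec ω.2 i

/-- the doubled gaussian measure -/
def PP (N : ℕ) : Measure ((Fin N → ℝ) × (Fin N → ℝ)) := (γPi N).prod (γPi N)

instance (N : ℕ) : IsProbabilityMeasure (PP N) := by
  unfold PP; infer_instance

variable {A B : Matrix (Fin (m+1)) (Fin (m+1)) ℝ} {θ : ℝ} {w : Fin (m+1) → ℝ}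

lemma continuous_Zmap : Continuous (Zmap A B θ) := by
  refine continuous_pi fun i => ?_
  exact (continuous_const.mul ((continuous_mulVecF' A i).comp continuous_fst)).add
    (continuous_const.mul ((continuous_mulVecF' B i).comp continuous_snd))

lemma continuous_gtpZ (hw : ∀ i, 0 < w i) (i : Fin (m+1)) :
    Continuous fun ω => gtp w i (Zmap A B θ ω) :=
  (continuous_gtp hw i).comp continuous_Zmap

lemma integrable_abs_a (i : Fin (m+1)) :
    Integrable (fun ω : (Fin (m+1) → ℝ) × (Fin (m+1) → ℝ) => |A.mulVec ω.1 i|) (PP (m+1)) :=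
  integrable_comp_fst ((continuous_abs.comp (continuous_mulVecF' A i)).aestronglyMeasurable)
    (integrable_abs_mulVec A i)

lemma integrable_abs_b (i : Fin (m+1)) :
    Integrable (fun ω : (Fin (m+1) → ℝ) × (Fin (m+1) → ℝ) => |B.mulVec ω.2 i|) (PP (m+1)) :=
  integrable_comp_snd ((continuous_abs.comp (continuous_mulVecF' B i)).aestronglyMeasurable)
    (integrable_abs_mulVec B i)

lemma integrable_abs_fst_eval (k : Fin (m+1)) :
    Integrable (fun ω : (Fin (m+1) → ℝ) × (Fin (m+1) → ℝ) => |ω.1 k|) (PP (m+1)) :=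
  integrable_comp_fst (continuous_abs.comp (continuous_apply k)).aestronglyMeasurable
    (integrable_abs_eval k)

lemma integrable_abs_snd_eval (k : Fin (m+1)) :
    Integrable (fun ω : (Fin (m+1) → ℝ) × (Fin (m+1) → ℝ) => |ω.2 k|) (PP (m+1)) :=
  integrable_comp_snd (continuous_abs.comp (continuous_apply k)).aestronglyMeasurable
    (integrable_abs_eval k)

/-- helper algebra bound -/
lemma abs_mul_le_of_le_one {p c : ℝ} (hp : |p| ≤ 1) : |p * c| ≤ |c| := by
  rw [abs_mul]
  exact mul_le_of_le_one_left (abs_nonneg c) hp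

/-- Integration by parts in the first gaussian vector. -/
lemma ibp1 (hw : ∀ i, 0 < w i) (i k : Fin (m+1)) :
    ∫ ω, ω.1 k * gtp w i (Zmap A B θ ω) ∂PP (m+1)
      = ∫ ω, gtp w i (Zmap A B θ ω) * (Real.sin θ * A i k)
          - gtp w i (Zmap A B θ ω) * ∑ j, gtp w j (Zmap A B θ ω) * (Real.sin θ * A j k)
          ∂PP (m+1) := by
  have hM' : ∀ (x : (Fin (m+1) → ℝ) × (Fin (m+1) → ℝ)),
      |gtp w i (Zmap A B θ x) * (Real.sin θ * A i k)
        - gtp w i (Zmap A B θ x) * ∑ j, gtp w j (Zmap A B θ x) * (Real.sin θ * A j k)|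
      ≤ |A i k| + ∑ j, |A j k| := by
    intro x
    refine le_trans (abs_sub _ _) (add_le_add ?_ ?_)
    · refine le_trans (abs_mul_le_of_le_one (abs_gtp_le_one hw i _)) ?_
      rw [abs_mul]
      exact mul_le_of_le_one_left (abs_nonneg _) (abs_sin_le_one θ)
    · refine le_trans (abs_mul_le_of_le_one (abs_gtp_le_one hw i _)) ?_
      refine le_trans (Finset.abs_sum_le_sum_abs _ _) (Finset.sum_le_sum fun j _ => ?_)
      refine le_trans (abs_mul_le_of_le_one (abs_gtp_le_one hw j _)) ?_
      rw [abs_mul]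
      exact mul_le_of_le_one_left (abs_nonneg _) (abs_sin_le_one θ)
  have hcontG' : Continuous fun ω : (Fin (m+1) → ℝ) × (Fin (m+1) → ℝ) =>
      gtp w i (Zmap A B θ ω) * (Real.sin θ * A i k)
        - gtp w i (Zmap A B θ ω) * ∑ j, gtp w j (Zmap A B θ ω) * (Real.sin θ * A j k) := by
    refine ((continuous_gtpZ hw i).mul continuous_const).sub
      ((continuous_gtpZ hw i).mul (continuous_finset_sum _ fun j _ =>
        (continuous_gtpZ hw j).mul continuous_const))
  have int1 : Integrable (fun ω : (Fin (m+1) → ℝ) × (Fin (m+1) → ℝ) =>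
      ω.1 k * gtp w i (Zmap A B θ ω)) (PP (m+1)) := by
    refine (integrable_abs_fst_eval k).mono'
      ((((continuous_apply k).comp continuous_fst).mul (continuous_gtpZ hw i)).aestronglyMeasurable)
      (ae_of_all _ fun ω => ?_)
    rw [Real.norm_eq_abs, abs_mul, mul_comm |ω.1 k| _]
    exact mul_le_of_le_one_left (abs_nonneg _) (abs_gtp_le_one hw i _)
  have int2 : Integrable (fun ω : (Fin (m+1) → ℝ) × (Fin (m+1) → ℝ) =>
      gtp w i (Zmap A B θ ω) * (Real.sin θ * A i k)
        - gtp w i (Zmap A B θ ω) * ∑ j, gtp w j (Zmap A B θ ω) * (Real.sin θ * A j k))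
      (PP (m+1)) :=
    integrable_of_bounded hcontG' hM'
  rw [PP] at *
  rw [integral_prod_symm _ int1, integral_prod_symm _ int2]
  refine integral_congr_ae (ae_of_all _ fun h => ?_)
  have := pi_ibp k
    (G := fun g => gtp w i (Zmap A B θ (g, h)))
    (G' := fun g => gtp w i (Zmap A B θ (g, h)) * (Real.sin θ * A i k)
      - gtp w i (Zmap A B θ (g, h)) * ∑ j, gtp w j (Zmap A B θ (g, h)) * (Real.sin θ * A j k))
    ((continuous_gtpZ hw i).comp (Continuous.prodMk_left h))
    (hcontG'.comp (Continuous.prodMk_left h))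
    (fun g => abs_gtp_le_one hw i _) (fun g => hM' _)
    (fun y t => ?_)
  · exact this
  · -- derivative along coordinate k
    refine hasDerivAt_gtp hw i (x := fun s => Zmap A B θ (k.insertNth s y, h))
      (x' := fun j => Real.sin θ * A j k) (fun j => ?_)
    have h1 : HasDerivAt (fun s : ℝ => Real.sin θ * A.mulVec (k.insertNth s y) j)
        (Real.sin θ * A j k) t :=
      (hasDerivAt_mulVec_insertNth A k j y t).const_mul (Real.sin θ)
    have h2 := h1.add_const (Real.cos θ * B.mulVec h j)
    exact h2

/-- Integration by parts in the second gaussian vector. -/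
lemma ibp2 (hw : ∀ i, 0 < w i) (i k : Fin (m+1)) :
    ∫ ω, ω.2 k * gtp w i (Zmap A B θ ω) ∂PP (m+1)
      = ∫ ω, gtp w i (Zmap A B θ ω) * (Real.cos θ * B i k)
          - gtp w i (Zmap A B θ ω) * ∑ j, gtp w j (Zmap A B θ ω) * (Real.cos θ * B j k)
          ∂PP (m+1) := by
  have hM' : ∀ (x : (Fin (m+1) → ℝ) × (Fin (m+1) → ℝ)),
      |gtp w i (Zmap A B θ x) * (Real.cos θ * B i k)
        - gtp w i (Zmap A B θ x) * ∑ j, gtp w j (Zmap A B θ x) * (Real.cos θ * B j k)|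
      ≤ |B i k| + ∑ j, |B j k| := by
    intro x
    refine le_trans (abs_sub _ _) (add_le_add ?_ ?_)
    · refine le_trans (abs_mul_le_of_le_one (abs_gtp_le_one hw i _)) ?_
      rw [abs_mul]
      exact mul_le_of_le_one_left (abs_nonneg _) (abs_cos_le_one θ)
    · refine le_trans (abs_mul_le_of_le_one (abs_gtp_le_one hw i _)) ?_
      refine le_trans (Finset.abs_sum_le_sum_abs _ _) (Finset.sum_le_sum fun j _ => ?_)
      refine le_trans (abs_mul_le_of_le_one (abs_gtp_le_one hw j _)) ?_
      rw [abs_mul]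
      exact mul_le_of_le_one_left (abs_nonneg _) (abs_cos_le_one θ)
  have hcontG' : Continuous fun ω : (Fin (m+1) → ℝ) × (Fin (m+1) → ℝ) =>
      gtp w i (Zmap A B θ ω) * (Real.cos θ * B i k)
        - gtp w i (Zmap A B θ ω) * ∑ j, gtp w j (Zmap A B θ ω) * (Real.cos θ * B j k) := by
    refine ((continuous_gtpZ hw i).mul continuous_const).sub
      ((continuous_gtpZ hw i).mul (continuous_finset_sum _ fun j _ =>
        (continuous_gtpZ hw j).mul continuous_const))
  have int1 : Integrable (fun ω : (Fin (m+1) → ℝ) × (Fin (m+1) → ℝ) =>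
      ω.2 k * gtp w i (Zmap A B θ ω)) (PP (m+1)) := by
    refine (integrable_abs_snd_eval k).mono'
      ((((continuous_apply k).comp continuous_snd).mul (continuous_gtpZ hw i)).aestronglyMeasurable)
      (ae_of_all _ fun ω => ?_)
    rw [Real.norm_eq_abs, abs_mul, mul_comm |ω.2 k| _]
    exact mul_le_of_le_one_left (abs_nonneg _) (abs_gtp_le_one hw i _)
  have int2 : Integrable (fun ω : (Fin (m+1) → ℝ) × (Fin (m+1) → ℝ) =>
      gtp w i (Zmap A B θ ω) * (Real.cos θ * B i k)
        - gtp w i (Zmap A B θ ω) * ∑ j, gtp w j (Zmap A B θ ω) * (Real.cos θ * B j k))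
      (PP (m+1)) :=
    integrable_of_bounded hcontG' hM'
  rw [PP] at *
  rw [integral_prod _ int1, integral_prod _ int2]
  refine integral_congr_ae (ae_of_all _ fun g => ?_)
  have := pi_ibp k
    (G := fun h => gtp w i (Zmap A B θ (g, h)))
    (G' := fun h => gtp w i (Zmap A B θ (g, h)) * (Real.cos θ * B i k)
      - gtp w i (Zmap A B θ (g, h)) * ∑ j, gtp w j (Zmap A B θ (g, h)) * (Real.cos θ * B j k))
    ((continuous_gtpZ hw i).comp (Continuous.prodMk_right g))
    (hcontG'.comp (Continuous.prodMk_right g))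
    (fun h => abs_gtp_le_one hw i _) (fun h => hM' _)
    (fun y t => ?_)
  · exact this
  · refine hasDerivAt_gtp hw i (x := fun s => Zmap A B θ (g, k.insertNth s y))
      (x' := fun j => Real.cos θ * B j k) (fun j => ?_)
    have h1 : HasDerivAt (fun s : ℝ => Real.cos θ * B.mulVec (k.insertNth s y) j)
        (Real.cos θ * B j k) t :=
      (hasDerivAt_mulVec_insertNth B k j y t).const_mul (Real.cos θ)
    have h2 := h1.const_add (Real.sin θ * A.mulVec g j)
    exact h2

end G4

noncomputable section G5
open Matrix

variable {m : ℕ} {A B : Matrix (Fin (m+1)) (Fin (m+1)) ℝ} {θ : ℝ} {w : Fin (m+1) → ℝ}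

def Qint (A B : Matrix (Fin (m+1)) (Fin (m+1)) ℝ) (w : Fin (m+1) → ℝ) (θ : ℝ)
    (i : Fin (m+1)) : ℝ := ∫ ω, gtp w i (Zmap A B θ ω) ∂PP (m+1)

def Rint (A B : Matrix (Fin (m+1)) (Fin (m+1)) ℝ) (w : Fin (m+1) → ℝ) (θ : ℝ)
    (i j : Fin (m+1)) : ℝ :=
  ∫ ω, gtp w i (Zmap A B θ ω) * gtp w j (Zmap A B θ ω) ∂PP (m+1)

lemma Rint_nonneg (hw : ∀ i, 0 < w i) (i j : Fin (m+1)) : 0 ≤ Rint A B w θ i j :=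
  integral_nonneg fun ω => mul_nonneg (gtp_pos hw i _).le (gtp_pos hw j _).le

lemma int_gtpZ (hw : ∀ i, 0 < w i) (i : Fin (m+1)) :
    Integrable (fun ω => gtp w i (Zmap A B θ ω)) (PP (m+1)) :=
  integrable_of_bounded (continuous_gtpZ hw i) (fun ω => abs_gtp_le_one hw i _)

lemma int_gtpZ2 (hw : ∀ i, 0 < w i) (i j : Fin (m+1)) :
    Integrable (fun ω => gtp w i (Zmap A B θ ω) * gtp w j (Zmap A B θ ω)) (PP (m+1)) :=
  integrable_of_bounded ((continuous_gtpZ hw i).mul (continuous_gtpZ hw j))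
    (fun ω => by
      refine le_trans (abs_mul_le_of_le_one (abs_gtp_le_one hw i _)) (abs_gtp_le_one hw j _))

lemma int_fst_mul_gtpZ (hw : ∀ i, 0 < w i) (k i : Fin (m+1)) :
    Integrable (fun ω : (Fin (m+1) → ℝ) × (Fin (m+1) → ℝ) =>
      ω.1 k * gtp w i (Zmap A B θ ω)) (PP (m+1)) := by
  refine (integrable_abs_fst_eval k).mono'
    ((((continuous_apply k).comp continuous_fst).mul (continuous_gtpZ hw i)).aestronglyMeasurable)
    (ae_of_all _ fun ω => ?_)
  rw [Real.norm_eq_abs, abs_mul, mul_comm |ω.1 k| _]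
  exact mul_le_of_le_one_left (abs_nonneg _) (abs_gtp_le_one hw i _)

lemma int_snd_mul_gtpZ (hw : ∀ i, 0 < w i) (k i : Fin (m+1)) :
    Integrable (fun ω : (Fin (m+1) → ℝ) × (Fin (m+1) → ℝ) =>
      ω.2 k * gtp w i (Zmap A B θ ω)) (PP (m+1)) := by
  refine (integrable_abs_snd_eval k).mono'
    ((((continuous_apply k).comp continuous_snd).mul (continuous_gtpZ hw i)).aestronglyMeasurable)
    (ae_of_all _ fun ω => ?_)
  rw [Real.norm_eq_abs, abs_mul, mul_comm |ω.2 k| _]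
  exact mul_le_of_le_one_left (abs_nonneg _) (abs_gtp_le_one hw i _)

lemma sum_gtp_mul_int (hw : ∀ i, 0 < w i) (i : Fin (m+1)) (c : Fin (m+1) → ℝ) :
    (∫ ω, gtp w i (Zmap A B θ ω) * ∑ j, gtp w j (Zmap A B θ ω) * c j ∂PP (m+1))
      = ∑ j, Rint A B w θ i j * c j := by
  have e : (fun ω => gtp w i (Zmap A B θ ω) * ∑ j, gtp w j (Zmap A B θ ω) * c j)
      = fun ω => ∑ j, (gtp w i (Zmap A B θ ω) * gtp w j (Zmap A B θ ω)) * c j := by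
    funext ω
    rw [Finset.mul_sum]
    exact Finset.sum_congr rfl fun j _ => by ring
  rw [e, integral_finset_sum _ (fun j _ => (int_gtpZ2 hw i j).mul_const (c j))]
  exact Finset.sum_congr rfl fun j _ => integral_mul_const _ _

/-- first half of the derivative identity -/
lemma T1_eq (hw : ∀ i, 0 < w i) (i : Fin (m+1)) :
    ∫ ω, A.mulVec ω.1 i * gtp w i (Zmap A B θ ω) ∂PP (m+1)
      = Real.sin θ * ((A * A.transpose) i i * Qint A B w θ i
          - ∑ j, (A * A.transpose) i j * Rint A B w θ i j) := by
  have e1 : (fun ω : (Fin (m+1) → ℝ) × (Fin (m+1) → ℝ) =>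
      A.mulVec ω.1 i * gtp w i (Zmap A B θ ω))
      = fun ω => ∑ k, A i k * (ω.1 k * gtp w i (Zmap A B θ ω)) := by
    funext ω
    simp only [Matrix.mulVec, dotProduct, Finset.sum_mul, mul_assoc]
  rw [e1, integral_finset_sum _ (fun k _ => (int_fst_mul_gtpZ hw k i).const_mul (A i k))]
  have e2 : ∀ k, ∫ ω, A i k * (ω.1 k * gtp w i (Zmap A B θ ω)) ∂PP (m+1)
      = A i k * (Real.sin θ * A i k * Qint A B w θ i
          - ∑ j, Rint A B w θ i j * (Real.sin θ * A j k)) := by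
    intro k
    rw [integral_const_mul, ibp1 hw i k,
      integral_sub ((int_gtpZ hw i).mul_const _)
        (by
          refine (integrable_of_bounded ?_ (M := ∑ j, |Real.sin θ * A j k| ) ?_)
          · exact (continuous_gtpZ hw i).mul (continuous_finset_sum _ fun j _ =>
              (continuous_gtpZ hw j).mul continuous_const)
          · intro x
            refine le_trans (abs_mul_le_of_le_one (abs_gtp_le_one hw i _)) ?_
            refine le_trans (Finset.abs_sum_le_sum_abs _ _) (Finset.sum_le_sum fun j _ => ?_)
            exact abs_mul_le_of_le_one (abs_gtp_le_one hw j _)),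
      integral_mul_const, sum_gtp_mul_int (A := A) (B := B) hw i (fun j => Real.sin θ * A j k)]
    rw [Qint]
    ring
  rw [Finset.sum_congr rfl fun k _ => e2 k]
  -- pure algebra
  simp only [Matrix.mul_apply, Matrix.transpose_apply]
  simp only [mul_sub, Finset.mul_sum, Finset.sum_mul, Finset.sum_sub_distrib]
  congr 1
  · exact Finset.sum_congr rfl fun k _ => by ring
  · rw [Finset.sum_comm]
    exact Finset.sum_congr rfl fun k _ => Finset.sum_congr rfl fun j _ => by ring

end G5

section G6
open Matrix

variable {m : ℕ} {A B : Matrix (Fin (m+1)) (Fin (m+1)) ℝ} {θ : ℝ} {w : Fin (m+1) → ℝ}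

lemma T2_eq (hw : ∀ i, 0 < w i) (i : Fin (m+1)) :
    ∫ ω, B.mulVec ω.2 i * gtp w i (Zmap A B θ ω) ∂PP (m+1)
      = Real.cos θ * ((B * B.transpose) i i * Qint A B w θ i
          - ∑ j, (B * B.transpose) i j * Rint A B w θ i j) := by
  have e1 : (fun ω : (Fin (m+1) → ℝ) × (Fin (m+1) → ℝ) =>
      B.mulVec ω.2 i * gtp w i (Zmap A B θ ω))
      = fun ω => ∑ k, B i k * (ω.2 k * gtp w i (Zmap A B θ ω)) := by
    funext ω
    simp only [Matrix.mulVec, dotProduct, Finset.sum_mul, mul_assoc]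
  rw [e1, integral_finset_sum _ (fun k _ => (int_snd_mul_gtpZ hw k i).const_mul (B i k))]
  have e2 : ∀ k, ∫ ω, B i k * (ω.2 k * gtp w i (Zmap A B θ ω)) ∂PP (m+1)
      = B i k * (Real.cos θ * B i k * Qint A B w θ i
          - ∑ j, Rint A B w θ i j * (Real.cos θ * B j k)) := by
    intro k
    rw [integral_const_mul, ibp2 hw i k,
      integral_sub ((int_gtpZ hw i).mul_const _)
        (by
          refine (integrable_of_bounded ?_ (M := ∑ j, |Real.cos θ * B j k| ) ?_)
          · exact (continuous_gtpZ hw i).mul (continuous_finset_sum _ fun j _ =>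
              (continuous_gtpZ hw j).mul continuous_const)
          · intro x
            refine le_trans (abs_mul_le_of_le_one (abs_gtp_le_one hw i _)) ?_
            refine le_trans (Finset.abs_sum_le_sum_abs _ _) (Finset.sum_le_sum fun j _ => ?_)
            exact abs_mul_le_of_le_one (abs_gtp_le_one hw j _)),
      integral_mul_const, sum_gtp_mul_int (A := A) (B := B) hw i (fun j => Real.cos θ * B j k)]
    rw [Qint]
    ring
  rw [Finset.sum_congr rfl fun k _ => e2 k]
  simp only [Matrix.mul_apply, Matrix.transpose_apply]
  simp only [mul_sub, Finset.mul_sum, Finset.sum_mul, Finset.sum_sub_distrib]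
  congr 1
  · exact Finset.sum_congr rfl fun k _ => by ring
  · rw [Finset.sum_comm]
    exact Finset.sum_congr rfl fun k _ => Finset.sum_congr rfl fun j _ => by ring

/-- nonpositivity of the derivative of the interpolation -/
lemma D_nonpos (hw : ∀ i, 0 < w i)
    (hdiag : ∀ i, (A * A.transpose) i i = (B * B.transpose) i i)
    (hoff : ∀ i j, i ≠ j → (B * B.transpose) i j ≤ (A * A.transpose) i j)
    (hs : 0 ≤ Real.sin θ) (hc : 0 ≤ Real.cos θ) :
    ∫ ω, (∑ i, gtp w i (Zmap A B θ ω) *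
        (Real.cos θ * A.mulVec ω.1 i - Real.sin θ * B.mulVec ω.2 i)) ∂PP (m+1) ≤ 0 := by
  have hint : ∀ i : Fin (m+1), Integrable (fun ω : (Fin (m+1) → ℝ) × (Fin (m+1) → ℝ) =>
      gtp w i (Zmap A B θ ω) *
        (Real.cos θ * A.mulVec ω.1 i - Real.sin θ * B.mulVec ω.2 i)) (PP (m+1)) := by
    intro i
    refine ((integrable_abs_a (A := A) i).add (integrable_abs_b (B := B) i)).mono'
      ((continuous_gtpZ hw i).mul
        ((continuous_const.mul ((continuous_mulVecF' A i).comp continuous_fst)).sub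
          (continuous_const.mul ((continuous_mulVecF' B i).comp continuous_snd)))).aestronglyMeasurable
      (ae_of_all _ fun ω => ?_)
    rw [Real.norm_eq_abs]
    refine le_trans (abs_mul_le_of_le_one (abs_gtp_le_one hw i _)) ?_
    refine le_trans (abs_sub _ _) (add_le_add ?_ ?_)
    · rw [abs_mul]
      exact mul_le_of_le_one_left (abs_nonneg _) (abs_cos_le_one θ)
    · rw [abs_mul]
      exact mul_le_of_le_one_left (abs_nonneg _) (abs_sin_le_one θ)
  rw [integral_finset_sum _ (fun i _ => hint i)]
  have key : ∀ i : Fin (m+1),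
      ∫ ω, gtp w i (Zmap A B θ ω) *
        (Real.cos θ * A.mulVec ω.1 i - Real.sin θ * B.mulVec ω.2 i) ∂PP (m+1)
      = - (Real.cos θ * Real.sin θ) *
          (∑ j, ((A * A.transpose) i j - (B * B.transpose) i j) * Rint A B w θ i j) := by
    intro i
    have e : (fun ω : (Fin (m+1) → ℝ) × (Fin (m+1) → ℝ) =>
        gtp w i (Zmap A B θ ω) *
          (Real.cos θ * A.mulVec ω.1 i - Real.sin θ * B.mulVec ω.2 i))
        = fun ω => Real.cos θ * (A.mulVec ω.1 i * gtp w i (Zmap A B θ ω))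
            - Real.sin θ * (B.mulVec ω.2 i * gtp w i (Zmap A B θ ω)) := by
      funext ω; ring
    have intA : Integrable (fun ω : (Fin (m+1) → ℝ) × (Fin (m+1) → ℝ) =>
        A.mulVec ω.1 i * gtp w i (Zmap A B θ ω)) (PP (m+1)) := by
      refine (integrable_abs_a (A := A) i).mono'
        (((continuous_mulVecF' A i).comp continuous_fst).mul (continuous_gtpZ hw i)).aestronglyMeasurable
        (ae_of_all _ fun ω => ?_)
      rw [Real.norm_eq_abs, abs_mul, mul_comm]
      exact mul_le_of_le_one_left (abs_nonneg _) (abs_gtp_le_one hw i _)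
    have intB : Integrable (fun ω : (Fin (m+1) → ℝ) × (Fin (m+1) → ℝ) =>
        B.mulVec ω.2 i * gtp w i (Zmap A B θ ω)) (PP (m+1)) := by
      refine (integrable_abs_b (B := B) i).mono'
        (((continuous_mulVecF' B i).comp continuous_snd).mul (continuous_gtpZ hw i)).aestronglyMeasurable
        (ae_of_all _ fun ω => ?_)
      rw [Real.norm_eq_abs, abs_mul, mul_comm]
      exact mul_le_of_le_one_left (abs_nonneg _) (abs_gtp_le_one hw i _)
    rw [e, integral_sub (intA.const_mul _) (intB.const_mul _),
      integral_const_mul, integral_const_mul, T1_eq hw i, T2_eq hw i, hdiag i]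
    rw [show (∑ j, ((A * A.transpose) i j - (B * B.transpose) i j) * Rint A B w θ i j)
        = ∑ j, (A * A.transpose) i j * Rint A B w θ i j
          - ∑ j, (B * B.transpose) i j * Rint A B w θ i j from by
      rw [← Finset.sum_sub_distrib]; exact Finset.sum_congr rfl fun j _ => by ring]
    ring
  rw [Finset.sum_congr rfl fun i _ => key i]
  refine Finset.sum_nonpos fun i _ => ?_
  rw [neg_mul]
  refine neg_nonpos_of_nonneg (mul_nonneg (mul_nonneg hc hs) ?_)
  refine Finset.sum_nonneg fun j _ => ?_
  rcases eq_or_ne i j with rfl | hne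
  · rw [hdiag i, sub_self, zero_mul]
  · exact mul_nonneg (sub_nonneg.2 (hoff i j hne)) (Rint_nonneg hw i j)

end G6

section G7
open Matrix

variable {m : ℕ}

lemma integral_snd_PP (f : (Fin (m+1) → ℝ) → ℝ) (hf : AEStronglyMeasurable f (γPi (m+1))) :
    ∫ ω, f ω.2 ∂PP (m+1) = ∫ h, f h ∂γPi (m+1) := by
  have hmap : Measure.map Prod.snd (PP (m+1)) = γPi (m+1) := by
    rw [PP, Measure.map_snd_prod]; simp
  calc ∫ ω, f ω.2 ∂PP (m+1) = ∫ x, f x ∂(Measure.map Prod.snd (PP (m+1))) :=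
        (integral_map measurable_snd.aemeasurable (by rwa [hmap])).symm
    _ = ∫ h, f h ∂γPi (m+1) := by rw [hmap]

lemma integral_fst_PP (f : (Fin (m+1) → ℝ) → ℝ) (hf : AEStronglyMeasurable f (γPi (m+1))) :
    ∫ ω, f ω.1 ∂PP (m+1) = ∫ g, f g ∂γPi (m+1) := by
  have hmap : Measure.map Prod.fst (PP (m+1)) = γPi (m+1) := by
    rw [PP, Measure.map_fst_prod]; simp
  calc ∫ ω, f ω.1 ∂PP (m+1) = ∫ x, f x ∂(Measure.map Prod.fst (PP (m+1))) :=
        (integral_map measurable_fst.aemeasurable (by rwa [hmap])).symm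
    _ = ∫ g, f g ∂γPi (m+1) := by rw [hmap]

lemma key_comparison (A B : Matrix (Fin (m+1)) (Fin (m+1)) ℝ) (w : Fin (m+1) → ℝ)
    (hw : ∀ i, 0 < w i)
    (hdiag : ∀ i, (A * A.transpose) i i = (B * B.transpose) i i)
    (hoff : ∀ i j, i ≠ j → (B * B.transpose) i j ≤ (A * A.transpose) i j) :
    ∫ g, gtf w (A.mulVec g) ∂γPi (m+1) ≤ ∫ g, gtf w (B.mulVec g) ∂γPi (m+1) := by
  set φ : ℝ → ℝ := fun θ => ∫ ω, gtf w (Zmap A B θ ω) ∂PP (m+1) with hφdef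
  -- the derivative of φ
  have hder : ∀ θ₀ : ℝ, HasDerivAt φ
      (∫ ω, (∑ i, gtp w i (Zmap A B θ₀ ω) *
        (Real.cos θ₀ * A.mulVec ω.1 i - Real.sin θ₀ * B.mulVec ω.2 i)) ∂PP (m+1)) θ₀ := by
    intro θ₀
    set Cw : ℝ := |Real.log (∑ i, w i)| + |Real.log (w 0)| with hCw
    have habs_bound : ∀ (θ : ℝ) ω, |gtf w (Zmap A B θ ω)|
        ≤ Cw + ∑ i, (|A.mulVec ω.1 i| + |B.mulVec ω.2 i|) := by
      intro θ ω
      refine le_trans (abs_gtf_le hw _) (add_le_add_right (Finset.sum_le_sum fun i _ => ?_) _)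
      rw [Zmap]
      refine le_trans (abs_add_le _ _) (add_le_add ?_ ?_)
      · rw [abs_mul]; exact mul_le_of_le_one_left (abs_nonneg _) (abs_sin_le_one θ)
      · rw [abs_mul]; exact mul_le_of_le_one_left (abs_nonneg _) (abs_cos_le_one θ)
    have hbound_int : Integrable (fun ω : (Fin (m+1) → ℝ) × (Fin (m+1) → ℝ) =>
        ∑ i, (|A.mulVec ω.1 i| + |B.mulVec ω.2 i|)) (PP (m+1)) :=
      integrable_finset_sum _ fun i _ => (integrable_abs_a i).add (integrable_abs_b i)
    have res := hasDerivAt_integral_of_dominated_loc_of_deriv_le (𝕜 := ℝ)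
      (F := fun θ ω => gtf w (Zmap A B θ ω))
      (F' := fun θ ω => ∑ i, gtp w i (Zmap A B θ ω) *
        (Real.cos θ * A.mulVec ω.1 i - Real.sin θ * B.mulVec ω.2 i))
      (x₀ := θ₀) (s := Metric.ball θ₀ 1) (Metric.ball_mem_nhds θ₀ one_pos)
      (Filter.Eventually.of_forall fun θ =>
        ((continuous_gtf hw).comp continuous_Zmap).aestronglyMeasurable)
      (by
        refine (hbound_int.add (integrable_const Cw)).mono'
          ((continuous_gtf hw).comp continuous_Zmap).aestronglyMeasurable
          (ae_of_all _ fun ω => ?_)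
        rw [Real.norm_eq_abs]
        refine le_trans (habs_bound θ₀ ω) ?_
        rw [Pi.add_apply]
        ring_nf
        exact le_refl _)
      (by
        refine Continuous.aestronglyMeasurable ?_
        exact continuous_finset_sum _ fun i _ => (continuous_gtpZ hw i).mul
          ((continuous_const.mul ((continuous_mulVecF' A i).comp continuous_fst)).sub
            (continuous_const.mul ((continuous_mulVecF' B i).comp continuous_snd))))
      (ae_of_all _ fun ω θ _ => by
        rw [Real.norm_eq_abs]
        refine le_trans (Finset.abs_sum_le_sum_abs _ _) (Finset.sum_le_sum fun i _ => ?_)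
        refine le_trans (abs_mul_le_of_le_one (abs_gtp_le_one hw i _)) ?_
        refine le_trans (abs_sub _ _) (add_le_add ?_ ?_)
        · rw [abs_mul]; exact mul_le_of_le_one_left (abs_nonneg _) (abs_cos_le_one θ)
        · rw [abs_mul]; exact mul_le_of_le_one_left (abs_nonneg _) (abs_sin_le_one θ))
      hbound_int
      (ae_of_all _ fun ω θ _ => by
        refine hasDerivAt_gtf hw (x := fun θ' => Zmap A B θ' ω)
          (x' := fun i => Real.cos θ * A.mulVec ω.1 i - Real.sin θ * B.mulVec ω.2 i)
          (fun i => ?_)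
        have h := ((Real.hasDerivAt_sin θ).mul_const (A.mulVec ω.1 i)).add
          ((Real.hasDerivAt_cos θ).mul_const (B.mulVec ω.2 i))
        simp only [Zmap]
        refine h.congr_deriv ?_
        ring)
    exact res.2
  -- endpoints
  have hA : φ (Real.pi / 2) = ∫ g, gtf w (A.mulVec g) ∂γPi (m+1) := by
    rw [hφdef]
    have hz : ∀ ω : (Fin (m+1) → ℝ) × (Fin (m+1) → ℝ),
        Zmap A B (Real.pi / 2) ω = A.mulVec ω.1 := by
      intro ω; funext i; rw [Zmap]; simp
    simp only [hz]
    exact integral_fst_PP (fun g => gtf w (A.mulVec g))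
      ((continuous_gtf hw).comp (continuous_mulVecF A)).aestronglyMeasurable
  have hB : φ 0 = ∫ g, gtf w (B.mulVec g) ∂γPi (m+1) := by
    rw [hφdef]
    have hz : ∀ ω : (Fin (m+1) → ℝ) × (Fin (m+1) → ℝ),
        Zmap A B 0 ω = B.mulVec ω.2 := by
      intro ω; funext i; rw [Zmap]; simp
    simp only [hz]
    exact integral_snd_PP (fun g => gtf w (B.mulVec g))
      ((continuous_gtf hw).comp (continuous_mulVecF B)).aestronglyMeasurable
  -- antitonicity
  have hanti : AntitoneOn φ (Set.Icc 0 (Real.pi / 2)) := by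
    refine antitoneOn_of_deriv_nonpos (convex_Icc _ _)
      (fun θ _ => (hder θ).continuousAt.continuousWithinAt)
      (fun θ _ => (hder θ).differentiableAt.differentiableWithinAt)
      (fun θ hθ => ?_)
    rw [interior_Icc] at hθ
    rw [(hder θ).deriv]
    refine D_nonpos hw hdiag hoff ?_ ?_
    · refine Real.sin_nonneg_of_nonneg_of_le_pi hθ.1.le (le_trans hθ.2.le ?_)
      linarith [Real.pi_pos]
    · exact Real.cos_nonneg_of_mem_Icc ⟨by linarith [hθ.1, Real.pi_pos], hθ.2.le⟩
  have hle : φ (Real.pi / 2) ≤ φ 0 := by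
    refine hanti ?_ ?_ (by positivity)
    · exact ⟨le_refl 0, by positivity⟩
    · exact ⟨by positivity, le_refl _⟩
  rw [hA, hB] at hle
  exact hle

end G7

/-- **Guerra–Toninelli comparison.** If the two centered Gaussian vectors `X, Y`
have equal variances and `C^X_{ij} ≥ C^Y_{ij}` off the diagonal, then
`E[log Σ wᵢ e^{Yᵢ}] ≥ E[log Σ wᵢ e^{Xᵢ}]`. -/
theorem guerra_toninelli_comparison (n : ℕ) (μX μY : Measure (Fin n → ℝ))
    (CX CY : Matrix (Fin n) (Fin n) ℝ)
    (hX : IsCenteredGaussian n μX CX) (hY : IsCenteredGaussian n μY CY)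
    (w : Fin n → ℝ) (hw : ∀ i, 0 < w i)
    (hdiag : ∀ i, CX i i = CY i i)
    (hoff : ∀ i j, i ≠ j → CY i j ≤ CX i j) :
    (∫ x, Real.log (∑ i, w i * Real.exp (x i)) ∂μX)
      ≤ ∫ y, Real.log (∑ i, w i * Real.exp (y i)) ∂μY := by
  obtain ⟨A, hCX, hmX⟩ := hX
  obtain ⟨B, hCY, hmY⟩ := hY
  subst hCX hCY hmX hmY
  cases n with
  | zero => simp
  | succ m =>
    have hstd : stdGaussianPi (m+1) = γPi (m+1) := rfl
    have hiX : (∫ x, Real.log (∑ i, w i * Real.exp (x i))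
          ∂(stdGaussianPi (m+1)).map A.mulVec)
        = ∫ g, gtf w (A.mulVec g) ∂γPi (m+1) := by
      exact integral_map (f := gtf w) ((continuous_mulVecF A).measurable.aemeasurable)
        ((continuous_gtf hw).aestronglyMeasurable)
    have hiY : (∫ y, Real.log (∑ i, w i * Real.exp (y i))
          ∂(stdGaussianPi (m+1)).map B.mulVec)
        = ∫ g, gtf w (B.mulVec g) ∂γPi (m+1) := by
      exact integral_map (f := gtf w) ((continuous_mulVecF B).measurable.aemeasurable)
        ((continuous_gtf hw).aestronglyMeasurable)
    rw [hiX, hiY]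
    exact key_comparison A B w hw hdiag hoff
end

section
/- Let D be an n×n real symmetric matrix and define G: Iⁿ → ℝ by G(μ) = Σ_{i=1}ⁿ μ_i D_{ii} − Σ_{i=1}ⁿ Σ_{j=1}ⁿ μ_i μ_j D_{ij}, where Iⁿ = {μ ∈ ℝⁿ : μ_i ≥ 0 for all i, Σ_{i=1}ⁿ μ_i = 1} is the standard simplex. Then inf_{μ ∈ Iⁿ} G(μ) ≥ 0 if and only if D_{ii} + D_{jj} − 2D_{ij} ≥ 0 for all i, j ∈ {1,…,n}. -/
/-- For a symmetric matrix `D`, the function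
`G(μ) = Σᵢ μᵢ Dᵢᵢ − Σᵢⱼ μᵢ μⱼ Dᵢⱼ` on the standard simplex `Iⁿ` satisfies
`inf_{μ ∈ Iⁿ} G(μ) ≥ 0` iff `Dᵢᵢ + Dⱼⱼ − 2Dᵢⱼ ≥ 0` for all `i, j`. -/
theorem simplex_inf_nonneg_iff (n : ℕ) (D : Matrix (Fin n) (Fin n) ℝ)
    (hD : D.IsSymm) :
    0 ≤ sInf ((fun μ : Fin n → ℝ =>
          (∑ i, μ i * D i i) - ∑ i, ∑ j, μ i * μ j * D i j) ''
        {μ : Fin n → ℝ | (∀ i, 0 ≤ μ i) ∧ ∑ i, μ i = 1})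
      ↔ ∀ i j, 0 ≤ D i i + D j j - 2 * D i j := by
  set G : (Fin n → ℝ) → ℝ := fun μ =>
      (∑ i, μ i * D i i) - ∑ i, ∑ j, μ i * μ j * D i j with hGdef
  have hset : {μ : Fin n → ℝ | (∀ i, 0 ≤ μ i) ∧ ∑ i, μ i = 1}
      = stdSimplex ℝ (Fin n) := rfl
  constructor
  · intro h i j
    have hcont : Continuous G := by fun_prop
    have hbdd : BddBelow (G '' {μ : Fin n → ℝ | (∀ i, 0 ≤ μ i) ∧ ∑ i, μ i = 1}) := by
      rw [hset]
      exact ((isCompact_stdSimplex ℝ (Fin n)).image hcont).bddBelow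
    set μ : Fin n → ℝ := fun k =>
      (if k = i then (1:ℝ)/2 else 0) + (if k = j then (1:ℝ)/2 else 0) with hμ
    have hmem : μ ∈ {μ : Fin n → ℝ | (∀ i, 0 ≤ μ i) ∧ ∑ i, μ i = 1} := by
      constructor
      · intro k
        dsimp [μ]
        positivity
      · simp [μ, Finset.sum_add_distrib]
        norm_num
    have hle : sInf (G '' {μ : Fin n → ℝ | (∀ i, 0 ≤ μ i) ∧ ∑ i, μ i = 1}) ≤ G μ :=
      csInf_le hbdd (Set.mem_image_of_mem G hmem)
    have hji : D j i = D i j := hD.apply i j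
    have hval : G μ = (D i i + D j j - 2 * D i j) / 4 := by
      simp only [hGdef, hμ, add_mul, mul_add, ite_mul, mul_ite, zero_mul, mul_zero,
        Finset.sum_add_distrib, Finset.sum_ite_eq, Finset.sum_ite_eq', Finset.mem_univ,
        if_true]
      rw [hji]; ring
    have : (0:ℝ) ≤ G μ := le_trans h hle
    rw [hval] at this
    linarith
  · intro h
    apply Real.sInf_nonneg
    rintro x ⟨μ, ⟨hpos, hsum⟩, rfl⟩
    have hA : ∀ i, ∑ k, μ i * μ k * D i i = μ i * D i i := by
      intro i
      have : ∑ k, μ i * μ k * D i i = μ i * D i i * ∑ k, μ k := by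
        rw [Finset.mul_sum]; exact Finset.sum_congr rfl fun k _ => by ring
      rw [this, hsum, mul_one]
    have hB : ∑ i, ∑ k, μ i * μ k * D k k = ∑ k, μ k * D k k := by
      rw [Finset.sum_comm]
      refine Finset.sum_congr rfl fun k _ => ?_
      have : ∑ i, μ i * μ k * D k k = μ k * D k k * ∑ i, μ i := by
        rw [Finset.mul_sum]; exact Finset.sum_congr rfl fun i _ => by ring
      rw [this, hsum, mul_one]
    have key : G μ = (1/2) * ∑ i, ∑ k, μ i * μ k * (D i i + D k k - 2 * D i k) := by
      simp only [hGdef]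
      have expand : ∀ i, ∑ k, μ i * μ k * (D i i + D k k - 2 * D i k)
          = (∑ k, μ i * μ k * D i i) + (∑ k, μ i * μ k * D k k)
            - 2 * ∑ k, μ i * μ k * D i k := by
        intro i
        rw [Finset.mul_sum, ← Finset.sum_add_distrib, ← Finset.sum_sub_distrib]
        exact Finset.sum_congr rfl fun k _ => by ring
      rw [Finset.sum_congr rfl fun i _ => expand i]
      rw [Finset.sum_sub_distrib, Finset.sum_add_distrib, ← Finset.mul_sum]
      rw [Finset.sum_congr rfl fun i _ => hA i, hB]
      ring
    rw [key]
    have : ∀ i ∈ Finset.univ, (0:ℝ) ≤ ∑ k, μ i * μ k * (D i i + D k k - 2 * D i k) := by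
      intro i _
      refine Finset.sum_nonneg fun k _ => ?_
      exact mul_nonneg (mul_nonneg (hpos i) (hpos k)) (h i k)
    have := Finset.sum_nonneg this
    linarith
end

section
/- Let (γ_i)_{i≥1} be a sequence of strictly positive reals with Σ_{i=1}^∞ γ_i = 1, and for each natural number M set k_i(M) = ⌊M γ_i⌋ and |k(M)| = Σ_{i=1}^∞ k_i(M). Then lim_{N→∞} max_{N₁+N₂=N, N₁,N₂≥1} ( |k(N)| − |k(N₁)| − |k(N₂)| ) / |k(N)| = 0 (the quantity in the numerator is nonnegative, and |k(N)| > 0 for all large N). -/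
/-- `|k(M)| = Σᵢ ⌊M γᵢ⌋` (as a real number; only finitely many terms are nonzero). -/
noncomputable def floorTotal (γ : ℕ → ℝ) (M : ℕ) : ℝ :=
  ∑' i, (⌊(M : ℝ) * γ i⌋₊ : ℝ)

section Aux

open Filter

variable {γ : ℕ → ℝ}

lemma floorTerm_summable (hγ : ∀ i, 0 < γ i) (hsum : Summable γ) (M : ℕ) :
    Summable (fun i => (⌊(M : ℝ) * γ i⌋₊ : ℝ)) := by
  refine Summable.of_nonneg_of_le (fun i => by positivity)
    (fun i => Nat.floor_le (mul_nonneg (by positivity) (hγ i).le)) (hsum.mul_left (M : ℝ))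

/-- indicator of `1 ≤ N γ i` -/
noncomputable def indTerm (γ : ℕ → ℝ) (N : ℕ) (i : ℕ) : ℝ :=
  if 1 ≤ (N : ℝ) * γ i then 1 else 0

lemma indTerm_nonneg (γ : ℕ → ℝ) (N i : ℕ) : 0 ≤ indTerm γ N i := by
  unfold indTerm; split <;> norm_num

lemma indTerm_le (hγ : ∀ i, 0 < γ i) (N i : ℕ) : indTerm γ N i ≤ (N : ℝ) * γ i := by
  unfold indTerm
  split_ifs with h
  · exact h
  · exact mul_nonneg (by positivity) (hγ i).le

lemma indTerm_le_one (N i : ℕ) : indTerm γ N i ≤ 1 := by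
  unfold indTerm; split <;> norm_num

lemma indTerm_summable (hγ : ∀ i, 0 < γ i) (hsum : Summable γ) (N : ℕ) :
    Summable (indTerm γ N) :=
  Summable.of_nonneg_of_le (indTerm_nonneg γ N) (indTerm_le hγ N) (hsum.mul_left (N : ℝ))

lemma floorTotal_superadd (hγ : ∀ i, 0 < γ i) (hsum : Summable γ) (N₁ N₂ : ℕ) :
    floorTotal γ N₁ + floorTotal γ N₂ ≤ floorTotal γ (N₁ + N₂) := by
  unfold floorTotal
  rw [← Summable.tsum_add (floorTerm_summable hγ hsum N₁) (floorTerm_summable hγ hsum N₂)]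
  refine Summable.tsum_le_tsum (fun i => ?_)
    ((floorTerm_summable hγ hsum N₁).add (floorTerm_summable hγ hsum N₂))
    (floorTerm_summable hγ hsum (N₁ + N₂))
  have h1 : (0:ℝ) ≤ (N₁:ℝ) * γ i := mul_nonneg (by positivity) (hγ i).le
  have h2 : (0:ℝ) ≤ (N₂:ℝ) * γ i := mul_nonneg (by positivity) (hγ i).le
  have : ⌊(N₁:ℝ) * γ i⌋₊ + ⌊(N₂:ℝ) * γ i⌋₊ ≤ ⌊((N₁ + N₂ : ℕ) : ℝ) * γ i⌋₊ := by
    apply Nat.le_floor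
    push_cast
    rw [add_mul]
    exact add_le_add (Nat.floor_le h1) (Nat.floor_le h2)
  exact_mod_cast this

lemma floorTotal_defect_le (hγ : ∀ i, 0 < γ i) (hsum : Summable γ) (N₁ N₂ : ℕ) :
    floorTotal γ (N₁ + N₂) ≤ floorTotal γ N₁ + floorTotal γ N₂
      + ∑' i, indTerm γ (N₁ + N₂) i := by
  unfold floorTotal
  rw [← Summable.tsum_add (floorTerm_summable hγ hsum N₁) (floorTerm_summable hγ hsum N₂),
    ← Summable.tsum_add ((floorTerm_summable hγ hsum N₁).add (floorTerm_summable hγ hsum N₂))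
      (indTerm_summable hγ hsum (N₁ + N₂))]
  refine Summable.tsum_le_tsum (fun i => ?_) (floorTerm_summable hγ hsum (N₁ + N₂))
    (((floorTerm_summable hγ hsum N₁).add (floorTerm_summable hγ hsum N₂)).add
      (indTerm_summable hγ hsum (N₁ + N₂)))
  by_cases h : 1 ≤ ((N₁ + N₂ : ℕ) : ℝ) * γ i
  · have hind : indTerm γ (N₁ + N₂) i = 1 := if_pos h
    rw [hind]
    have hlt : (⌊((N₁ + N₂ : ℕ) : ℝ) * γ i⌋₊ : ℝ) <
        (⌊(N₁:ℝ) * γ i⌋₊ : ℝ) + (⌊(N₂:ℝ) * γ i⌋₊ : ℝ) + 2 := by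
      calc (⌊((N₁ + N₂ : ℕ) : ℝ) * γ i⌋₊ : ℝ) ≤ ((N₁ + N₂ : ℕ) : ℝ) * γ i :=
            Nat.floor_le (by positivity)
        _ = (N₁:ℝ) * γ i + (N₂:ℝ) * γ i := by push_cast; ring
        _ < ((⌊(N₁:ℝ) * γ i⌋₊ : ℝ) + 1) + ((⌊(N₂:ℝ) * γ i⌋₊ : ℝ) + 1) :=
            add_lt_add (Nat.lt_floor_add_one _) (Nat.lt_floor_add_one _)
        _ = (⌊(N₁:ℝ) * γ i⌋₊ : ℝ) + (⌊(N₂:ℝ) * γ i⌋₊ : ℝ) + 2 := by ring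
    have hnat : ⌊((N₁ + N₂ : ℕ) : ℝ) * γ i⌋₊ <
        ⌊(N₁:ℝ) * γ i⌋₊ + ⌊(N₂:ℝ) * γ i⌋₊ + 2 := by exact_mod_cast hlt
    have hle : ⌊((N₁ + N₂ : ℕ) : ℝ) * γ i⌋₊ ≤
        ⌊(N₁:ℝ) * γ i⌋₊ + ⌊(N₂:ℝ) * γ i⌋₊ + 1 := by omega
    exact_mod_cast hle
  · push_neg at h
    have h0 : ⌊((N₁ + N₂ : ℕ) : ℝ) * γ i⌋₊ = 0 := Nat.floor_eq_zero.2 h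
    rw [h0]
    have := indTerm_nonneg γ (N₁ + N₂) i
    have a1 : (0:ℝ) ≤ (⌊(N₁:ℝ) * γ i⌋₊ : ℝ) := Nat.cast_nonneg _
    have a2 : (0:ℝ) ≤ (⌊(N₂:ℝ) * γ i⌋₊ : ℝ) := Nat.cast_nonneg _
    push_cast
    linarith

/-- `(∑' i, indTerm γ N i) / N → 0`. -/
lemma indSum_div_tendsto (hγ : ∀ i, 0 < γ i) (hsum : Summable γ) :
    Tendsto (fun N : ℕ => (∑' i, indTerm γ N i) / N) atTop (nhds 0) := by
  rw [Metric.tendsto_atTop]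
  intro ε hε
  -- pick a tail with small sum
  have htail : Tendsto (fun n => ∑' i, γ (i + n)) atTop (nhds 0) := tendsto_sum_nat_add γ
  obtain ⟨n, hn⟩ := (htail.eventually (gt_mem_nhds (half_pos hε))).exists
  -- choose N₀ so that n / N < ε/2 for N ≥ N₀
  obtain ⟨N₀, hN₀⟩ := exists_nat_gt ((2 * n) / ε)
  refine ⟨max N₀ 1, fun N hN => ?_⟩
  have hN1 : 1 ≤ N := le_trans (le_max_right _ _) hN
  have hNpos : (0:ℝ) < N := by exact_mod_cast hN1
  have hsum_ind := indTerm_summable hγ hsum N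
  have hsum_tail : Summable (fun i => indTerm γ N (i + n)) :=
    (summable_nat_add_iff n).2 hsum_ind
  have hsum_gtail : Summable (fun i => γ (i + n)) := (summable_nat_add_iff n).2 hsum
  -- decompose
  have hdecomp : ∑' i, indTerm γ N i
      = ∑ i ∈ Finset.range n, indTerm γ N i + ∑' i, indTerm γ N (i + n) :=
    (Summable.sum_add_tsum_nat_add' hsum_tail).symm
  have hhead : ∑ i ∈ Finset.range n, indTerm γ N i ≤ n := by
    calc ∑ i ∈ Finset.range n, indTerm γ N i ≤ ∑ _i ∈ Finset.range n, (1:ℝ) :=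
          Finset.sum_le_sum (fun i _ => indTerm_le_one _ _)
      _ = n := by simp
  have htail2 : ∑' i, indTerm γ N (i + n) ≤ (N:ℝ) * ∑' i, γ (i + n) := by
    rw [← tsum_mul_left]
    exact Summable.tsum_le_tsum (fun i => indTerm_le hγ N _) hsum_tail (hsum_gtail.mul_left _)
  have hCN : ∑' i, indTerm γ N i ≤ (n:ℝ) + N * ∑' i, γ (i + n) := by
    rw [hdecomp]; exact add_le_add hhead htail2
  have hC_nonneg : 0 ≤ ∑' i, indTerm γ N i := tsum_nonneg (fun i => indTerm_nonneg γ N i)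
  rw [Real.dist_eq, sub_zero, abs_of_nonneg (div_nonneg hC_nonneg hNpos.le)]
  have hbound : (∑' i, indTerm γ N i) / N ≤ (n:ℝ) / N + ∑' i, γ (i + n) := by
    rw [div_le_iff₀ hNpos, add_mul, div_mul_cancel₀ _ hNpos.ne']
    linarith [hCN]
  have hnN : (n:ℝ) / N < ε / 2 := by
    rw [div_lt_iff₀ hNpos]
    have hN₀N : (N₀:ℝ) ≤ N := by exact_mod_cast le_trans (le_max_left _ _) hN
    have h2n : (2 * (n:ℝ)) / ε < N := lt_of_lt_of_le hN₀ hN₀N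
    rw [div_lt_iff₀ hε] at h2n
    nlinarith
  linarith [hn.le, hn]

end Aux

/-- If `γᵢ > 0` and `Σᵢ γᵢ = 1`, then with `|k(M)| = Σᵢ ⌊M γᵢ⌋`:
the quantity `|k(N)| − |k(N₁)| − |k(N₂)|` is nonnegative for every decomposition
`N = N₁ + N₂` with `N₁, N₂ ≥ 1`, `|k(N)| > 0` for all large `N`, and
`max_{N₁+N₂=N, N₁,N₂≥1} (|k(N)| − |k(N₁)| − |k(N₂)|)/|k(N)| → 0` as `N → ∞`. -/
theorem floor_total_defect_limit (γ : ℕ → ℝ) (hγ : ∀ i, 0 < γ i)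
    (hsum : Summable γ) (h1 : ∑' i, γ i = 1) :
    (∀ N₁ N₂ : ℕ, 1 ≤ N₁ → 1 ≤ N₂ →
        0 ≤ floorTotal γ (N₁ + N₂) - floorTotal γ N₁ - floorTotal γ N₂) ∧
    (∀ᶠ N : ℕ in Filter.atTop, 0 < floorTotal γ N) ∧
    Filter.Tendsto (fun N : ℕ =>
        sSup {r : ℝ | ∃ N₁ N₂ : ℕ, 1 ≤ N₁ ∧ 1 ≤ N₂ ∧ N₁ + N₂ = N ∧
          r = (floorTotal γ N - floorTotal γ N₁ - floorTotal γ N₂) / floorTotal γ N})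
      Filter.atTop (nhds 0) := by
  have hγ0 := hγ 0
  -- lower bound on floorTotal
  have hlow : ∀ N : ℕ, (N:ℝ) * γ 0 - 1 < floorTotal γ N := by
    intro N
    have h1' : (⌊(N:ℝ) * γ 0⌋₊ : ℝ) ≤ floorTotal γ N :=
      Summable.le_tsum (floorTerm_summable hγ hsum N) 0 (fun j _ => by positivity)
    have h2' : (N:ℝ) * γ 0 - 1 < (⌊(N:ℝ) * γ 0⌋₊ : ℝ) := by
      have := Nat.lt_floor_add_one ((N:ℝ) * γ 0)
      linarith
    linarith
  -- eventual positivity threshold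
  obtain ⟨N₀, hN₀⟩ := exists_nat_gt (2 / γ 0)
  have hNbig : ∀ N : ℕ, N₀ ≤ N → (N:ℝ) * γ 0 / 2 ≤ floorTotal γ N ∧ 0 < floorTotal γ N := by
    intro N hN
    have hNN₀ : (N₀:ℝ) ≤ N := by exact_mod_cast hN
    have h2N : 2 / γ 0 < (N:ℝ) := lt_of_lt_of_le hN₀ hNN₀
    have h2 : 2 < (N:ℝ) * γ 0 := by
      rw [div_lt_iff₀ hγ0] at h2N; linarith
    have := hlow N
    constructor <;> nlinarith
  refine ⟨?_, ?_, ?_⟩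
  · intro N₁ N₂ _ _
    have := floorTotal_superadd hγ hsum N₁ N₂
    linarith
  · exact Filter.eventually_atTop.2 ⟨N₀, fun N hN => (hNbig N hN).2⟩
  · -- squeeze
    have hC := indSum_div_tendsto hγ hsum
    have hg : Filter.Tendsto (fun N : ℕ => (2 / γ 0) * ((∑' i, indTerm γ N i) / N))
        Filter.atTop (nhds 0) := by
      simpa using hC.const_mul (2 / γ 0)
    refine squeeze_zero' ?_ ?_ hg
    · filter_upwards [Filter.eventually_atTop.2 ⟨max N₀ 2, fun N hN => hN⟩] with N hN
      have hN₀' : N₀ ≤ N := le_trans (le_max_left _ _) hN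
      have h2N : 2 ≤ N := le_trans (le_max_right _ _) hN
      obtain ⟨hfl, hfp⟩ := hNbig N hN₀'
      -- element for (1, N-1)
      have hmem : (floorTotal γ N - floorTotal γ 1 - floorTotal γ (N - 1)) / floorTotal γ N
          ∈ {r : ℝ | ∃ N₁ N₂ : ℕ, 1 ≤ N₁ ∧ 1 ≤ N₂ ∧ N₁ + N₂ = N ∧
            r = (floorTotal γ N - floorTotal γ N₁ - floorTotal γ N₂) / floorTotal γ N} :=
        ⟨1, N - 1, le_refl 1, by omega, by omega, rfl⟩
      have hbdd : BddAbove {r : ℝ | ∃ N₁ N₂ : ℕ, 1 ≤ N₁ ∧ 1 ≤ N₂ ∧ N₁ + N₂ = N ∧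
          r = (floorTotal γ N - floorTotal γ N₁ - floorTotal γ N₂) / floorTotal γ N} := by
        refine ⟨(∑' i, indTerm γ N i) / floorTotal γ N, ?_⟩
        rintro r ⟨N₁, N₂, h₁, h₂, hNe, rfl⟩
        have hdef := floorTotal_defect_le hγ hsum N₁ N₂
        rw [hNe] at hdef
        exact (div_le_div_iff_of_pos_right hfp).2 (by linarith)
      have hnn : 0 ≤ (floorTotal γ N - floorTotal γ 1 - floorTotal γ (N - 1)) /
          floorTotal γ N := by
        have hsup := floorTotal_superadd hγ hsum 1 (N - 1)
        have heq : 1 + (N - 1) = N := by omega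
        rw [heq] at hsup
        apply div_nonneg (by linarith) hfp.le
      exact le_trans hnn (le_csSup hbdd hmem)
    · filter_upwards [Filter.eventually_atTop.2 ⟨max N₀ 2, fun N hN => hN⟩] with N hN
      have hN₀' : N₀ ≤ N := le_trans (le_max_left _ _) hN
      have h2N : 2 ≤ N := le_trans (le_max_right _ _) hN
      have hNpos : (0:ℝ) < N := by
        have : 0 < N := by omega
        exact_mod_cast this
      obtain ⟨hfl, hfp⟩ := hNbig N hN₀'
      have hC_nonneg : 0 ≤ ∑' i, indTerm γ N i := tsum_nonneg (fun i => indTerm_nonneg γ N i)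
      have hflpos : (0:ℝ) < (N:ℝ) * γ 0 / 2 := by positivity
      have hBeq : (∑' i, indTerm γ N i) / ((N:ℝ) * γ 0 / 2)
          = (2 / γ 0) * ((∑' i, indTerm γ N i) / N) := by
        field_simp
      refine Real.sSup_le ?_ ?_
      · rintro r ⟨N₁, N₂, h₁, h₂, hNe, rfl⟩
        have hdef := floorTotal_defect_le hγ hsum N₁ N₂
        rw [hNe] at hdef
        calc (floorTotal γ N - floorTotal γ N₁ - floorTotal γ N₂) / floorTotal γ N
            ≤ (∑' i, indTerm γ N i) / floorTotal γ N :=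
              (div_le_div_iff_of_pos_right hfp).2 (by linarith)
          _ ≤ (∑' i, indTerm γ N i) / ((N:ℝ) * γ 0 / 2) := by gcongr
          _ = (2 / γ 0) * ((∑' i, indTerm γ N i) / N) := hBeq
      · positivity
end
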